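/- arXiv:1912.10474 — 4 statements merged into one kernel-verified Lean document; each statement's English description precedes it below -/
import Mathlib

section
/- Let x ∈ E_d and r = (r₁,…,r_d) ∈ ℝ₊^d. Then there exists a solution s = (s₁,…,s_d) ∈ [0,∞]^d of the system (r, x) such that every other solution t of (r, x) satisfies t ≥ s in the coordinatewise partial order. (This s is called the smallest solution of the system (r, x).) -/
open Filter Topology Set
open scoped ENNReal

noncomputable section

/-- The value of `f` "at `t⁻`" for an extended time `t ∈ [0,∞]`, as an extended real number:
at `t = 0` it is `f 0` (convention `f(0-) = f(0)`), at `t = ∞` it is the limit (limsup) of `f`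
at infinity, and at a finite `t > 0` it is the left limit of `f` at `t`. -/
def preLimE (f : ℝ → ℝ) (t : ℝ≥0∞) : EReal :=
  if t = 0 then (f 0 : EReal)
  else if t = ⊤ then Filter.limsup (fun s : ℝ => (f s : EReal)) Filter.atTop
  else ((Function.leftLim f t.toReal : ℝ) : EReal)

/-- The family `x = (x^{i,j})_{i,j ∈ [d]}` of real functions on `ℝ₊` belongs to the class
`E_d`: each `x i j` is càdlàg on `ℝ₊` with `x i j 0 = 0`, each diagonal entry `x i i` is
downward skip free (no negative jumps), and each off-diagonal entry is nondecreasing. -/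
structure MemE (d : ℕ) (x : Fin d → Fin d → ℝ → ℝ) : Prop where
  zero : ∀ i j, x i j 0 = 0
  rightCont : ∀ i j, ∀ t : ℝ, 0 ≤ t → ContinuousWithinAt (x i j) (Set.Ici t) t
  leftLimEx : ∀ i j, ∀ t : ℝ, 0 < t →
    ∃ l : ℝ, Filter.Tendsto (x i j) (nhdsWithin t (Set.Iio t)) (nhds l)
  skipFree : ∀ i, ∀ t : ℝ, 0 < t → Function.leftLim (x i i) t ≤ x i i t
  mono : ∀ i j, i ≠ j → MonotoneOn (x i j) (Set.Ici 0)

/-- `s ∈ [0,∞]^d` is a solution of the system `(r, x)`: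
`r i + ∑_j x^{i,j}(s_j−) = 0` for every coordinate `i` with `s i < ∞`
(the equality being required in the extended reals, hence implicitly the sum is finite). -/
def IsSolution (d : ℕ) (x : Fin d → Fin d → ℝ → ℝ) (r : Fin d → ℝ)
    (s : Fin d → ℝ≥0∞) : Prop :=
  ∀ i, s i ≠ ⊤ → (r i : EReal) + ∑ j, preLimE (x i j) (s j) = 0

namespace SmallestSolutionAux

set_option linter.unusedVariables false
set_option linter.unusedSectionVars false

def Hits (f : ℝ → ℝ) (a : ℝ) (v : ℝ) : Prop :=
  ∀ ε > (0:ℝ), ∃ u, 0 ≤ u ∧ u ≤ v ∧ f u < -a + ε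

def Tpass (f : ℝ → ℝ) (a : ℝ) : ℝ≥0∞ :=
  sInf (ENNReal.ofReal '' {v | 0 ≤ v ∧ Hits f a v})

lemma Tpass_le_of_hits {f : ℝ → ℝ} {a v : ℝ} (hv0 : 0 ≤ v) (h : Hits f a v) :
    Tpass f a ≤ ENNReal.ofReal v :=
  sInf_le ⟨v, ⟨hv0, h⟩, rfl⟩

lemma not_hits_of_lt {f : ℝ → ℝ} {a v : ℝ} (hv0 : 0 ≤ v)
    (h : ENNReal.ofReal v < Tpass f a) : ∃ ε > (0:ℝ), ∀ u, 0 ≤ u → u ≤ v → -a + ε ≤ f u := by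
  have hh : ¬ Hits f a v := fun hh => absurd (Tpass_le_of_hits hv0 hh) (not_le.2 h)
  unfold Hits at hh
  push_neg at hh
  obtain ⟨ε, hε, hu⟩ := hh
  exact ⟨ε, hε, fun u h0 h1 => (hu u h0 h1)⟩

lemma exists_hit_of_lt {f : ℝ → ℝ} {a : ℝ} {w : ℝ≥0∞} (h : Tpass f a < w) :
    ∃ v, 0 ≤ v ∧ Hits f a v ∧ ENNReal.ofReal v < w := by
  obtain ⟨b, hb, hbw⟩ := sInf_lt_iff.1 h
  obtain ⟨v, ⟨hv0, hv⟩, rfl⟩ := hb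
  exact ⟨v, hv0, hv, hbw⟩

lemma passage (f : ℝ → ℝ) (hf0 : f 0 = 0)
    (hrc : ∀ t : ℝ, 0 ≤ t → ContinuousWithinAt f (Set.Ici t) t)
    (hll : ∀ t : ℝ, 0 < t → ∃ l, Tendsto f (𝓝[<] t) (𝓝 l))
    (hsf : ∀ t : ℝ, 0 < t → Function.leftLim f t ≤ f t)
    {a : ℝ} (ha : 0 ≤ a) (hT : Tpass f a ≠ ⊤) :
    preLimE f (Tpass f a) = ((-a : ℝ) : EReal) := by
  set τ := Tpass f a with hτ
  rcases eq_or_ne τ 0 with h0 | h0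
  · -- passage time 0 : then a = 0
    have ha0 : a ≤ 0 := by
      by_contra hapos
      push_neg at hapos
      -- right continuity at 0 gives f > -a/2 on [0, u')
      have hev : ∀ᶠ u in 𝓝[≥] (0:ℝ), -a/2 < f u := by
        refine (hrc 0 le_rfl).eventually (eventually_gt_nhds ?_)
        rw [hf0]; linarith
      obtain ⟨u', hu', hsub⟩ := mem_nhdsGE_iff_exists_Ico_subset.1 hev
      have : τ < ENNReal.ofReal u' := by
        rw [h0]; exact ENNReal.ofReal_pos.2 hu'
      obtain ⟨v, hv0, hv, hvlt⟩ := exists_hit_of_lt this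
      have hvu' : v < u' := by
        rwa [ENNReal.ofReal_lt_ofReal_iff hu'] at hvlt
      obtain ⟨u, hu0, huv, hufu⟩ := hv (a/2) (by linarith)
      have : -a/2 < f u := hsub ⟨hu0, lt_of_le_of_lt huv hvu'⟩
      linarith
    have haz : a = 0 := le_antisymm ha0 ha
    rw [h0, preLimE, if_pos rfl, hf0, haz]
    norm_num
  · -- 0 < τ < ⊤
    have ht0pos : 0 < τ.toReal := ENNReal.toReal_pos h0 hT
    set t0 := τ.toReal with ht0
    obtain ⟨l, hl⟩ := hll t0 ht0pos
    have hleft : Function.leftLim f t0 = l :=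
      leftLim_eq_of_tendsto hl
    have hofto : ENNReal.ofReal t0 = τ := ENNReal.ofReal_toReal hT
    -- any 0 ≤ v < t0 satisfies ¬ Hits
    have hbelow : ∀ v : ℝ, 0 ≤ v → v < t0 → ∃ ε > (0:ℝ), ∀ u, 0 ≤ u → u ≤ v → -a + ε ≤ f u := by
      intro v hv0 hvt
      apply not_hits_of_lt hv0
      rw [← hτ, ← hofto]
      exact ENNReal.ofReal_lt_ofReal_iff ht0pos |>.2 hvt
    -- lower bound : -a ≤ l
    have hge : -a ≤ l := by
      refine ge_of_tendsto hl ?_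
      have h2 : ∀ᶠ u in 𝓝[<] t0, u ∈ Ioo 0 t0 := Ioo_mem_nhdsLT_of_mem ⟨ht0pos, le_rfl⟩
      refine h2.mono fun u hu => ?_
      obtain ⟨ε, hε, hb⟩ := hbelow u hu.1.le hu.2
      have := hb u hu.1.le le_rfl
      linarith
    -- upper bound : l ≤ -a
    have hle : l ≤ -a := by
      by_contra hlt
      push_neg at hlt
      set ε := (l + a)/2 with hεdef
      have hε : 0 < ε := by simp only [hεdef]; linarith
      have hlgt : -a + ε < l := by simp only [hεdef]; linarith
      -- left side
      have hevl : ∀ᶠ u in 𝓝[<] t0, -a + ε < f u := hl.eventually (eventually_gt_nhds hlgt)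
      obtain ⟨m', hm', hsubl⟩ := mem_nhdsLT_iff_exists_Ioo_subset.1 hevl
      set m := max m' 0 with hm
      have hm0 : 0 ≤ m := le_max_right _ _
      have hmt0 : m < t0 := max_lt hm' ht0pos
      obtain ⟨ε2, hε2, hb2⟩ := hbelow m hm0 hmt0
      -- value at t0
      have hft0 : l ≤ f t0 := hleft ▸ hsf t0 ht0pos
      -- right side
      have hevr : ∀ᶠ u in 𝓝[≥] t0, -a + ε < f u :=
        (hrc t0 ht0pos.le).eventually (eventually_gt_nhds (lt_of_lt_of_le hlgt hft0))
      obtain ⟨u', hu', hsubr⟩ := mem_nhdsGE_iff_exists_Ico_subset.1 hevr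
      -- get a hit below u'
      have : τ < ENNReal.ofReal u' := by
        rw [← hofto]
        exact ENNReal.ofReal_lt_ofReal_iff (ht0pos.trans hu') |>.2 hu'
      obtain ⟨v, hv0, hv, hvlt⟩ := exists_hit_of_lt this
      have hvu' : v < u' := by
        rwa [ENNReal.ofReal_lt_ofReal_iff (ht0pos.trans hu')] at hvlt
      obtain ⟨u, hu0, huv, hufu⟩ := hv (min ε ε2) (lt_min hε hε2)
      have huu' : u < u' := lt_of_le_of_lt huv hvu'
      rcases le_or_gt u m with h1 | h1
      · have := hb2 u hu0 h1
        have := min_le_right ε ε2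
        linarith [min_le_right ε ε2]
      · rcases lt_or_ge u t0 with h2 | h2
        · have : -a + ε < f u := hsubl ⟨lt_of_le_of_lt (le_max_left m' 0) h1, h2⟩
          linarith [min_le_left ε ε2]
        · have : -a + ε < f u := hsubr ⟨h2, huu'⟩
          linarith [min_le_left ε ε2]
    have : l = -a := le_antisymm hle hge
    rw [preLimE, if_neg h0, if_neg hT, ← ht0, hleft, this]


lemma hits_mono {f : ℝ → ℝ} {a v v' : ℝ} (hv : v ≤ v') (h : Hits f a v) : Hits f a v' := by
  intro ε hε
  obtain ⟨u, h0, h1, h2⟩ := h ε hε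
  exact ⟨u, h0, h1.trans hv, h2⟩

lemma hits_anti {f : ℝ → ℝ} {a a' v : ℝ} (ha : a' ≤ a) (h : Hits f a v) : Hits f a' v := by
  intro ε hε
  obtain ⟨u, h0, h1, h2⟩ := h ε hε
  exact ⟨u, h0, h1, h2.trans_le (by linarith)⟩

lemma Tpass_mono {f : ℝ → ℝ} {a a' : ℝ} (ha : a ≤ a') : Tpass f a ≤ Tpass f a' := by
  apply sInf_le_sInf
  rintro w ⟨v, ⟨hv0, hv⟩, rfl⟩
  exact ⟨v, ⟨hv0, hits_anti ha hv⟩, rfl⟩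

lemma Tpass_eq_zero_of_nonpos {f : ℝ → ℝ} (hf0 : f 0 = 0) {a : ℝ} (ha : a ≤ 0) :
    Tpass f a = 0 := by
  have h : Tpass f a ≤ ENNReal.ofReal 0 := by
    apply Tpass_le_of_hits le_rfl
    intro ε hε
    exact ⟨0, le_rfl, le_rfl, by rw [hf0]; linarith⟩
  simpa using h

lemma Tpass_le_of_leftLim {f : ℝ → ℝ} {a t0 : ℝ} (ht0 : 0 < t0)
    (h : Tendsto f (𝓝[<] t0) (𝓝 (-a))) : Tpass f a ≤ ENNReal.ofReal t0 := by
  apply Tpass_le_of_hits ht0.le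
  intro ε hε
  have h1 : ∀ᶠ u in 𝓝[<] t0, f u < -a + ε := h.eventually (eventually_lt_nhds (by linarith))
  have h2 : ∀ᶠ u in 𝓝[<] t0, u ∈ Ioo 0 t0 := Ioo_mem_nhdsLT_of_mem ⟨ht0, le_rfl⟩
  obtain ⟨u, hu1, hu2⟩ := (h1.and h2).exists
  exact ⟨u, hu2.1.le, hu2.2.le, hu1⟩


lemma preLimE_mono {f : ℝ → ℝ} (hf0 : f 0 = 0) (hm : MonotoneOn f (Ici 0))
    (hll : ∀ t : ℝ, 0 < t → ∃ l, Tendsto f (𝓝[<] t) (𝓝 l)) :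
    Monotone (preLimE f) := by
  have key : ∀ v : ℝ, 0 < v → Tendsto f (𝓝[<] v) (𝓝 (Function.leftLim f v)) := by
    intro v hv
    obtain ⟨l, hl⟩ := hll v hv
    rwa [leftLim_eq_of_tendsto hl]
  have fact1 : ∀ w v : ℝ, 0 ≤ w → w < v → f w ≤ Function.leftLim f v := by
    intro w v hw hwv
    refine ge_of_tendsto (key v (hw.trans_lt hwv)) ?_
    have h2 : ∀ᶠ u in 𝓝[<] v, u ∈ Ioo w v := Ioo_mem_nhdsLT_of_mem ⟨hwv, le_rfl⟩
    exact h2.mono fun u hu => hm hw (hw.trans hu.1.le) hu.1.le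
  have fact2 : ∀ v : ℝ, 0 < v → Function.leftLim f v ≤ f v := by
    intro v hv
    refine le_of_tendsto (key v hv) ?_
    have h2 : ∀ᶠ u in 𝓝[<] v, u ∈ Ioo 0 v := Ioo_mem_nhdsLT_of_mem ⟨hv, le_rfl⟩
    exact h2.mono fun u hu => hm hu.1.le hv.le hu.2.le
  have fact3 : ∀ w : ℝ, 0 ≤ w →
      ((f w : EReal)) ≤ Filter.limsup (fun s : ℝ => (f s : EReal)) Filter.atTop := by
    intro w hw
    refine le_limsup_of_frequently_le ?_ (Filter.isBoundedUnder_of ⟨⊤, fun _ => le_top⟩)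
    apply Filter.Eventually.frequently
    filter_upwards [eventually_ge_atTop w] with u hu
    exact_mod_cast hm hw (hw.trans hu) hu
  intro u u' huu'
  rcases eq_or_lt_of_le huu' with rfl | hlt
  · exact le_rfl
  rcases eq_or_ne u' ⊤ with rfl | htop'
  · -- target is limsup
    have hR : preLimE f ⊤ = Filter.limsup (fun s : ℝ => (f s : EReal)) Filter.atTop := by
      rw [preLimE, if_neg ENNReal.top_ne_zero, if_pos rfl]
    rw [hR]
    rcases eq_or_ne u 0 with rfl | h0
    · rw [preLimE, if_pos rfl]; exact fact3 0 le_rfl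
    · rw [preLimE, if_neg h0, if_neg hlt.ne]
      have hpos : 0 < u.toReal := ENNReal.toReal_pos h0 hlt.ne
      calc ((Function.leftLim f u.toReal : ℝ) : EReal) ≤ ((f u.toReal : ℝ) : EReal) := by
            exact_mod_cast fact2 _ hpos
        _ ≤ _ := fact3 _ hpos.le
  · -- u' finite
    have h0' : u' ≠ 0 := by
      intro h; rw [h] at hlt; exact (not_lt_bot hlt)
    have hpos' : 0 < u'.toReal := ENNReal.toReal_pos h0' htop'
    rw [preLimE, preLimE, if_neg h0', if_neg htop']
    rcases eq_or_ne u 0 with rfl | h0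
    · rw [if_pos rfl]
      have h := fact1 0 u'.toReal le_rfl hpos'
      exact_mod_cast h
    · have htop : u ≠ ⊤ := hlt.ne_top
      rw [if_neg h0, if_neg htop]
      have hpos : 0 < u.toReal := ENNReal.toReal_pos h0 htop
      have hltR : u.toReal < u'.toReal := ENNReal.toReal_lt_toReal htop htop' |>.2 hlt
      calc ((Function.leftLim f u.toReal : ℝ) : EReal) ≤ ((f u.toReal : ℝ) : EReal) := by
            exact_mod_cast fact2 _ hpos
        _ ≤ _ := by exact_mod_cast fact1 _ _ hpos.le hltR

lemma preLimE_nonneg {f : ℝ → ℝ} (hf0 : f 0 = 0) (hm : MonotoneOn f (Ici 0))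
    (hll : ∀ t : ℝ, 0 < t → ∃ l, Tendsto f (𝓝[<] t) (𝓝 l)) (u : ℝ≥0∞) :
    0 ≤ preLimE f u := by
  have := preLimE_mono hf0 hm hll (zero_le : 0 ≤ u)
  rw [preLimE, if_pos rfl, hf0] at this
  exact_mod_cast le_trans (by norm_num) this

lemma preLimE_coe {f : ℝ → ℝ} {u : ℝ≥0∞} (hu : u ≠ ⊤) :
    ∃ c : ℝ, preLimE f u = (c : EReal) := by
  rcases eq_or_ne u 0 with rfl | h0
  · exact ⟨f 0, by rw [preLimE, if_pos rfl]⟩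
  · exact ⟨Function.leftLim f u.toReal, by rw [preLimE, if_neg h0, if_neg hu]⟩

variable {d : ℕ} (x : Fin d → Fin d → ℝ → ℝ) (r : Fin d → ℝ)

/-- `r i` plus the off-diagonal part of the `i`-th equation. -/
def Aval (t : Fin d → ℝ≥0∞) (i : Fin d) : EReal :=
  (r i : EReal) + ∑ j ∈ Finset.univ.erase i, preLimE (x i j) (t j)

/-- The iteration map. -/
def Gam (t : Fin d → ℝ≥0∞) (i : Fin d) : ℝ≥0∞ :=
  if Aval x r t i = ⊤ then ⊤ else Tpass (x i i) (Aval x r t i).toReal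

variable (hx : MemE d x) (hr : ∀ i, 0 ≤ r i)
include hx hr

lemma Aval_nonneg (t : Fin d → ℝ≥0∞) (i : Fin d) : 0 ≤ Aval x r t i := by
  apply add_nonneg
  · exact_mod_cast hr i
  · apply Finset.sum_nonneg
    intro j hj
    have hji : j ≠ i := Finset.ne_of_mem_erase hj
    exact preLimE_nonneg (hx.zero i j) (hx.mono i j (Ne.symm hji)) (hx.leftLimEx i j) _

lemma Aval_ne_bot (t : Fin d → ℝ≥0∞) (i : Fin d) : Aval x r t i ≠ ⊥ :=
  fun h => absurd (h ▸ Aval_nonneg x r hx hr t i) (by simp)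

lemma Aval_mono {t t' : Fin d → ℝ≥0∞} (h : t ≤ t') (i : Fin d) :
    Aval x r t i ≤ Aval x r t' i := by
  apply add_le_add le_rfl
  apply Finset.sum_le_sum
  intro j hj
  have hji : j ≠ i := Finset.ne_of_mem_erase hj
  exact preLimE_mono (hx.zero i j) (hx.mono i j (Ne.symm hji)) (hx.leftLimEx i j) (h j)

lemma Gam_mono : Monotone (Gam x r) := by
  intro t t' h i
  rcases eq_or_ne (Aval x r t' i) ⊤ with h' | h'
  · simp [Gam, h']
  · have hle : Aval x r t i ≤ Aval x r t' i := Aval_mono x r hx hr h i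
    have hne : Aval x r t i ≠ ⊤ := fun hh => h' (top_le_iff.1 (hh ▸ hle))
    rw [Gam, Gam, if_neg hne, if_neg h']
    exact Tpass_mono (EReal.toReal_le_toReal hle (Aval_ne_bot x r hx hr t i) h')

/-- splitting of the equation -/
lemma eq_split (t : Fin d → ℝ≥0∞) (i : Fin d) :
    (r i : EReal) + ∑ j, preLimE (x i j) (t j)
      = Aval x r t i + preLimE (x i i) (t i) := by
  rw [Aval, add_assoc, Finset.sum_erase_add _ _ (Finset.mem_univ i)]

/-- The least fixed point of `Gam` is a solution. -/
lemma lfp_isSolution :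
    IsSolution d x r (OrderHom.lfp ⟨Gam x r, Gam_mono x r hx hr⟩) := by
  set G : (Fin d → ℝ≥0∞) →o (Fin d → ℝ≥0∞) := ⟨Gam x r, Gam_mono x r hx hr⟩ with hG
  set s := OrderHom.lfp G with hs
  have hfix : Gam x r s = s := OrderHom.map_lfp G
  intro i hi
  have hGi : Gam x r s i = s i := congrFun hfix i
  have hA : Aval x r s i ≠ ⊤ := by
    intro h
    rw [Gam, if_pos h] at hGi
    exact hi hGi.symm
  set a := (Aval x r s i).toReal with ha
  have hcoe : ((a : ℝ) : EReal) = Aval x r s i :=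
    EReal.coe_toReal hA (Aval_ne_bot x r hx hr s i)
  have ha0 : 0 ≤ a := by
    have := EReal.toReal_le_toReal (Aval_nonneg x r hx hr s i) (by simp) hA
    simpa using this
  have hsi : s i = Tpass (x i i) a := by
    rw [← hGi, Gam, if_neg hA]
  have hTne : Tpass (x i i) a ≠ ⊤ := hsi ▸ hi
  have hpass : preLimE (x i i) (Tpass (x i i) a) = ((-a : ℝ) : EReal) :=
    passage (x i i) (hx.zero i i) (hx.rightCont i i) (hx.leftLimEx i i)
      (hx.skipFree i) ha0 hTne
  rw [eq_split x r hx hr, hsi, hpass, ← hcoe, ← EReal.coe_add]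
  norm_num

/-- Every solution is a prefixed point of `Gam`. -/
lemma solution_prefixed {t : Fin d → ℝ≥0∞} (ht : IsSolution d x r t) :
    Gam x r t ≤ t := by
  intro i
  rcases eq_or_ne (t i) ⊤ with htop | htop
  · rw [htop]; exact le_top
  · have heq := ht i htop
    rw [eq_split x r hx hr] at heq
    obtain ⟨c, hc⟩ := preLimE_coe (f := x i i) htop
    rw [hc] at heq
    have hA : Aval x r t i ≠ ⊤ := by
      intro h
      rw [h, EReal.top_add_coe] at heq
      exact absurd heq (by simp)
    set a := (Aval x r t i).toReal with ha
    have hcoe : ((a : ℝ) : EReal) = Aval x r t i :=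
      EReal.coe_toReal hA (Aval_ne_bot x r hx hr t i)
    have ha0 : 0 ≤ a := by
      have := EReal.toReal_le_toReal (Aval_nonneg x r hx hr t i) (by simp) hA
      simpa using this
    have hac : a + c = 0 := by
      rw [← hcoe, ← EReal.coe_add] at heq
      exact_mod_cast heq
    have hGam : Gam x r t i = Tpass (x i i) a := by rw [Gam, if_neg hA]
    rcases eq_or_ne (t i) 0 with h0 | h0
    · -- c = x i i 0 = 0 hence a = 0
      have hc0 : preLimE (x i i) (t i) = ((x i i 0 : ℝ) : EReal) := by
        rw [h0, preLimE, if_pos rfl]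
      rw [hc] at hc0
      have : c = x i i 0 := by exact_mod_cast hc0
      have hcz : c = 0 := this.trans (hx.zero i i)
      have : a = 0 := by rw [hcz] at hac; linarith
      rw [hGam, Tpass_eq_zero_of_nonpos (hx.zero i i) this.le]
      exact zero_le
    · -- t i finite positive : left limit equals -a
      have hpos : 0 < (t i).toReal := ENNReal.toReal_pos h0 htop
      obtain ⟨l, hl⟩ := hx.leftLimEx i i (t i).toReal hpos
      have hleft : Function.leftLim (x i i) (t i).toReal = l :=
        leftLim_eq_of_tendsto hl
      have hcl : c = l := by
        have : preLimE (x i i) (t i) = ((Function.leftLim (x i i) (t i).toReal : ℝ) : EReal) := by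
          rw [preLimE, if_neg h0, if_neg htop]
        rw [hc, hleft] at this
        exact_mod_cast this
      have hlna : l = -a := by rw [← hcl]; linarith
      rw [hGam]
      calc Tpass (x i i) a ≤ ENNReal.ofReal (t i).toReal :=
            Tpass_le_of_leftLim hpos (hlna ▸ hl)
        _ = t i := ENNReal.ofReal_toReal htop


end SmallestSolutionAux

/-- for `x ∈ E_d` and `r ∈ ℝ₊^d` there exists a smallest solution of the
system `(r, x)`: a solution `s` such that any other solution `t` satisfies `s ≤ t`
coordinatewise. -/
theorem exists_smallest_solution (d : ℕ) (hd : 1 ≤ d)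
    (x : Fin d → Fin d → ℝ → ℝ) (hx : MemE d x)
    (r : Fin d → ℝ) (hr : ∀ i, 0 ≤ r i) :
    ∃ s : Fin d → ℝ≥0∞, IsSolution d x r s ∧
      ∀ t : Fin d → ℝ≥0∞, IsSolution d x r t → s ≤ t := by
  refine ⟨OrderHom.lfp ⟨SmallestSolutionAux.Gam x r, SmallestSolutionAux.Gam_mono x r hx hr⟩,
    SmallestSolutionAux.lfp_isSolution x r hx hr, fun t ht => ?_⟩
  exact OrderHom.lfp_le _ (SmallestSolutionAux.solution_prefixed x r hx hr ht)


end
end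

section
/- Let x ∈ E_d and r, r' ∈ ℝ₊^d, and let s and s' be the smallest solutions of the systems (r, x) and (r', x), respectively. If r' ≤ r coordinatewise, then s' ≤ s. Moreover, if (r_n)_{n≥0} is a nondecreasing sequence in ℝ₊^d with lim_{n→∞} r_n = r, then the sequence (s_n)_{n≥0} of smallest solutions of the systems (r_n, x) satisfies lim_{n→∞} s_n = s. -/
open Filter Topology Set
open scoped ENNReal

noncomputable section

/-- `s` is the smallest solution of the system `(r, x)`: it is a solution and every
solution `t` satisfies `s ≤ t` coordinatewise. -/
def IsSmallestSolution (d : ℕ) (x : Fin d → Fin d → ℝ → ℝ) (r : Fin d → ℝ)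
    (s : Fin d → ℝ≥0∞) : Prop :=
  IsSolution d x r s ∧ ∀ t : Fin d → ℝ≥0∞, IsSolution d x r t → s ≤ t

namespace FPAux
open Function

lemma coe_sum {α : Type*} (s : Finset α) (f : α → ℝ) :
    ((∑ a ∈ s, f a : ℝ) : EReal) = ∑ a ∈ s, (f a : EReal) :=
  map_sum (⟨⟨(↑), EReal.coe_zero⟩, EReal.coe_add⟩ : ℝ →+ EReal) f s

lemma preLimE_zero (f : ℝ → ℝ) : preLimE f 0 = (f 0 : EReal) := if_pos rfl

lemma preLimE_top (f : ℝ → ℝ) :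
    preLimE f ⊤ = Filter.limsup (fun s : ℝ => (f s : EReal)) Filter.atTop := by
  rw [preLimE, if_neg (by simp), if_pos rfl]

lemma preLimE_of_ne (f : ℝ → ℝ) {u : ℝ≥0∞} (h0 : u ≠ 0) (ht : u ≠ ⊤) :
    preLimE f u = ((Function.leftLim f u.toReal : ℝ) : EReal) := by
  rw [preLimE, if_neg h0, if_neg ht]

lemma preLimE_real (f : ℝ → ℝ) {u : ℝ≥0∞} (ht : u ≠ ⊤) :
    ∃ y : ℝ, preLimE f u = (y : EReal) := by
  by_cases h0 : u = 0
  · exact ⟨f 0, by rw [h0, preLimE_zero]⟩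
  · exact ⟨_, preLimE_of_ne f h0 ht⟩

variable {g : ℝ → ℝ}

lemma tendsto_ll (hll : ∀ t : ℝ, 0 < t → ∃ l, Tendsto g (𝓝[<] t) (𝓝 l)) {t : ℝ} (ht : 0 < t) :
    Tendsto g (𝓝[<] t) (𝓝 (Function.leftLim g t)) := by
  obtain ⟨l, hl⟩ := hll t ht
  rwa [leftLim_eq_of_tendsto hl]

lemma tendsto_leftLim_gt (hrc : ∀ t : ℝ, 0 ≤ t → ContinuousWithinAt g (Set.Ici t) t)
    (hll : ∀ t : ℝ, 0 < t → ∃ l, Tendsto g (𝓝[<] t) (𝓝 l))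
    {t₀ : ℝ} (ht₀ : 0 ≤ t₀) :
    Tendsto (Function.leftLim g) (𝓝[>] t₀) (𝓝 (g t₀)) := by
  rw [Metric.tendsto_nhdsWithin_nhds]
  intro ε hε
  have h1 : {z | dist (g z) (g t₀) < ε / 2} ∈ 𝓝[Set.Ici t₀] t₀ :=
    (hrc t₀ ht₀) (Metric.ball_mem_nhds _ (by positivity))
  obtain ⟨δ, hδ, hδ'⟩ := Metric.mem_nhdsWithin_iff.mp h1
  refine ⟨δ, hδ, fun {v} hv hvd => ?_⟩
  have hv' : t₀ < v := hv
  have htend := tendsto_ll hll (lt_of_le_of_lt ht₀ hv')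
  have hd : dist (Function.leftLim g v) (g t₀) ≤ ε / 2 := by
    apply le_of_tendsto (htend.dist (tendsto_const_nhds (x := g t₀)))
    filter_upwards [Ioo_mem_nhdsLT_of_mem (⟨hv', le_refl v⟩ : v ∈ Set.Ioc t₀ v)] with z hz
    have : z ∈ Metric.ball t₀ δ ∩ Set.Ici t₀ := by
      constructor
      · rw [Metric.mem_ball, Real.dist_eq, abs_of_nonneg (by linarith [hz.1])]
        rw [Real.dist_eq] at hvd
        have : |v - t₀| < δ := hvd
        rw [abs_of_nonneg (by linarith)] at this
        linarith [hz.2]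
      · exact le_of_lt hz.1
    exact le_of_lt (hδ' this)
  linarith

lemma le_leftLim_of (hm : MonotoneOn g (Set.Ici 0))
    (hll : ∀ t : ℝ, 0 < t → ∃ l, Tendsto g (𝓝[<] t) (𝓝 l))
    {a t : ℝ} (ha : 0 ≤ a) (hat : a < t) :
    g a ≤ Function.leftLim g t := by
  apply ge_of_tendsto (tendsto_ll hll (lt_of_le_of_lt ha hat))
  filter_upwards [Ioo_mem_nhdsLT_of_mem (⟨hat, le_refl t⟩ : t ∈ Set.Ioc a t)] with z hz
  exact hm ha (le_trans ha hz.1.le) hz.1.le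

lemma leftLim_le_self (hm : MonotoneOn g (Set.Ici 0))
    (hll : ∀ t : ℝ, 0 < t → ∃ l, Tendsto g (𝓝[<] t) (𝓝 l))
    {t : ℝ} (ht : 0 < t) : Function.leftLim g t ≤ g t := by
  apply le_of_tendsto (tendsto_ll hll ht)
  filter_upwards [Ioo_mem_nhdsLT_of_mem (⟨ht, le_refl t⟩ : t ∈ Set.Ioc 0 t)] with z hz
  exact hm hz.1.le ht.le hz.2.le

lemma preLimE_nonneg (hg0 : g 0 = 0) (hm : MonotoneOn g (Set.Ici 0))
    (hll : ∀ t : ℝ, 0 < t → ∃ l, Tendsto g (𝓝[<] t) (𝓝 l))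
    (u : ℝ≥0∞) : 0 ≤ preLimE g u := by
  rcases eq_or_ne u 0 with rfl | h0
  · rw [preLimE_zero, hg0]; exact le_refl _
  rcases eq_or_ne u ⊤ with rfl | htop
  · rw [preLimE_top]
    apply Filter.le_limsup_of_frequently_le'
    apply ((eventually_ge_atTop (0:ℝ)).mono ?_).frequently
    intro s hs
    have : g 0 ≤ g s := hm (le_refl (0:ℝ)) hs hs
    rw [hg0] at this
    exact_mod_cast this
  · rw [preLimE_of_ne g h0 htop]
    have := le_leftLim_of hm hll (le_refl (0:ℝ)) (ENNReal.toReal_pos h0 htop)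
    rw [hg0] at this
    exact_mod_cast this

lemma preLimE_mono (hg0 : g 0 = 0) (hm : MonotoneOn g (Set.Ici 0))
    (hll : ∀ t : ℝ, 0 < t → ∃ l, Tendsto g (𝓝[<] t) (𝓝 l)) :
    Monotone (preLimE g) := by
  intro u v huv
  rcases eq_or_ne u 0 with rfl | hu0
  · rw [preLimE_zero, hg0]
    exact le_trans (le_refl _) (preLimE_nonneg hg0 hm hll v)
  rcases eq_or_ne v ⊤ with rfl | hvt
  · rcases eq_or_ne u ⊤ with rfl | hut
    · exact le_refl _
    rw [preLimE_of_ne g hu0 hut, preLimE_top]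
    apply Filter.le_limsup_of_frequently_le'
    apply ((eventually_ge_atTop (u.toReal)).mono ?_).frequently
    intro s hs
    have h1 : Function.leftLim g u.toReal ≤ g u.toReal :=
      leftLim_le_self hm hll (ENNReal.toReal_pos hu0 hut)
    have h2 : g u.toReal ≤ g s := hm ENNReal.toReal_nonneg (le_trans ENNReal.toReal_nonneg hs) hs
    exact_mod_cast le_trans h1 h2
  · have hut : u ≠ ⊤ := ne_top_of_le_ne_top hvt huv
    have hv0 : v ≠ 0 := fun h => hu0 (le_antisymm (h ▸ huv) zero_le)
    rw [preLimE_of_ne g hu0 hut, preLimE_of_ne g hv0 hvt]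
    have h1 : u.toReal ≤ v.toReal := ENNReal.toReal_mono hvt huv
    rcases eq_or_lt_of_le h1 with h2 | h2
    · rw [h2]
    · have h3 := leftLim_le_self hm hll (ENNReal.toReal_pos hu0 hut)
      have h4 := le_leftLim_of hm hll ENNReal.toReal_nonneg h2
      exact_mod_cast le_trans h3 h4


lemma preLimE_iSup (hg0 : g 0 = 0) (hm : MonotoneOn g (Set.Ici 0))
    (hll : ∀ t : ℝ, 0 < t → ∃ l, Tendsto g (𝓝[<] t) (𝓝 l))
    {u : ℕ → ℝ≥0∞} (hu : Monotone u) :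
    preLimE g (⨆ n, u n) = ⨆ n, preLimE g (u n) := by
  apply le_antisymm ?_ (iSup_le fun n => preLimE_mono hg0 hm hll (le_iSup u n))
  by_cases hex : ∃ n, u n = ⨆ n, u n
  · obtain ⟨n, hn⟩ := hex
    rw [← hn]
    exact le_iSup (fun n => preLimE g (u n)) n
  push_neg at hex
  have hlt : ∀ n, u n < ⨆ n, u n := fun n => lt_of_le_of_ne (le_iSup u n) (hex n)
  set U := ⨆ n, u n with hU

  have key : ∀ s : ℝ, 0 ≤ s → ENNReal.ofReal s < U → (g s : EReal) ≤ ⨆ n, preLimE g (u n) := by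
    intro s hs hsU
    obtain ⟨n, hn⟩ := lt_iSup_iff.mp hsU
    have hnt : u n ≠ ⊤ := ne_top_of_lt (hlt n)
    have hn0 : u n ≠ 0 := (lt_of_le_of_lt zero_le hn).ne'
    have hsn : s < (u n).toReal := (ENNReal.ofReal_lt_iff_lt_toReal hs hnt).mp hn
    have h1 : g s ≤ Function.leftLim g (u n).toReal := le_leftLim_of hm hll hs hsn
    calc (g s : EReal) ≤ ((Function.leftLim g (u n).toReal : ℝ) : EReal) := by exact_mod_cast h1
      _ = preLimE g (u n) := (preLimE_of_ne g hn0 hnt).symm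
      _ ≤ ⨆ n, preLimE g (u n) := le_iSup (fun n => preLimE g (u n)) n
  rcases eq_or_ne U ⊤ with hUt | hUt
  · rw [hUt, preLimE_top]
    apply Filter.limsup_le_of_le (by isBoundedDefault)
    filter_upwards [eventually_ge_atTop (0:ℝ)] with s hs
    exact key s hs (by rw [hUt]; exact ENNReal.ofReal_lt_top)
  · have hU0 : U ≠ 0 := by
      intro h
      exact absurd (hlt 0) (by simp [← hU, h])
    rw [preLimE_of_ne g hU0 hUt]
    have hT : 0 < U.toReal := ENNReal.toReal_pos hU0 hUt
    refine le_of_tendsto ((continuous_coe_real_ereal.tendsto _).comp (tendsto_ll hll hT)) ?_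
    filter_upwards [Ioo_mem_nhdsLT_of_mem (⟨hT, le_refl _⟩ : U.toReal ∈ Set.Ioc 0 U.toReal)] with z hz
    exact key z hz.1.le ((ENNReal.ofReal_lt_iff_lt_toReal hz.1.le hUt).mpr hz.2)

lemma preLimE_tendsto_ne_top (hll : ∀ t : ℝ, 0 < t → ∃ l, Tendsto g (𝓝[<] t) (𝓝 l))
    {u : ℕ → ℝ≥0∞} (hu : Monotone u) (hU : (⨆ n, u n) ≠ ⊤) :
    Tendsto (fun n => preLimE g (u n)) atTop (𝓝 (preLimE g (⨆ n, u n))) := by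
  set U := ⨆ n, u n with hUdef
  by_cases hex : ∃ n, u n = U
  · obtain ⟨N, hN⟩ := hex
    apply tendsto_const_nhds.congr'
    filter_upwards [eventually_ge_atTop N] with n hn
    have : u n = U := le_antisymm (le_iSup u n) (hN ▸ hu hn)
    rw [this]
  push_neg at hex
  have hlt : ∀ n, u n < U := fun n => lt_of_le_of_ne (le_iSup u n) (hex n)
  have hU0 : U ≠ 0 := by
    intro h
    exact absurd (hlt 0) (by simp [← hUdef, h])
  have hT : 0 < U.toReal := ENNReal.toReal_pos hU0 hU
  have huT : ∀ n, u n ≠ ⊤ := fun n => ne_top_of_lt (hlt n)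
  have hv_tend : Tendsto (fun n => (u n).toReal) atTop (𝓝 U.toReal) :=
    (ENNReal.tendsto_toReal hU).comp (tendsto_atTop_iSup hu)
  have hvlt : ∀ n, (u n).toReal < U.toReal := fun n =>
    (ENNReal.toReal_lt_toReal (huT n) hU).mpr (hlt n)
  rw [preLimE_of_ne g hU0 hU]
  have main : Tendsto (fun n => if u n = 0 then g 0 else Function.leftLim g (u n).toReal) atTop
      (𝓝 (Function.leftLim g U.toReal)) := by
    rw [Metric.tendsto_atTop]
    intro ε hε
    have h2 : {z | dist (g z) (Function.leftLim g U.toReal) < ε / 2} ∈ 𝓝[<] U.toReal :=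
      (tendsto_ll hll hT) (Metric.ball_mem_nhds _ (by positivity))
    obtain ⟨δ, hδpos, hδ⟩ := Metric.mem_nhdsWithin_iff.mp h2
    set L := max (U.toReal - δ) (U.toReal / 2) with hLdef
    have hLT : L < U.toReal := max_lt (by linarith) (by linarith)
    have hLpos : 0 < L := lt_of_lt_of_le (by linarith) (le_max_right _ _)
    have hev : ∀ᶠ n in atTop, L < (u n).toReal := hv_tend.eventually (eventually_gt_nhds hLT)
    obtain ⟨N, hN⟩ := eventually_atTop.mp hev
    refine ⟨N, fun n hn => ?_⟩
    have h3 := hN n hn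
    have h4 : 0 < (u n).toReal := lt_trans hLpos h3
    have hn0 : u n ≠ 0 := by
      intro h
      rw [h] at h4
      simp at h4
    rw [if_neg hn0]
    have h6 := tendsto_ll hll h4
    have h7 : dist (Function.leftLim g (u n).toReal) (Function.leftLim g U.toReal) ≤ ε / 2 := by
      apply le_of_tendsto (h6.dist (tendsto_const_nhds (x := Function.leftLim g U.toReal)))
      have hwin : U.toReal - δ < (u n).toReal := lt_of_le_of_lt (le_max_left _ _) h3
      filter_upwards [Ioo_mem_nhdsLT_of_mem
        (⟨hwin, le_refl _⟩ : (u n).toReal ∈ Set.Ioc (U.toReal - δ) (u n).toReal)] with z hz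
      have hzball : z ∈ Metric.ball U.toReal δ ∩ Set.Iio U.toReal := by
        constructor
        · rw [Metric.mem_ball, Real.dist_eq, abs_of_nonpos (by nlinarith [hvlt n, hz.2])]
          nlinarith [hz.1]
        · exact lt_trans hz.2 (hvlt n)
      exact le_of_lt (hδ hzball)
    rw [Real.dist_eq] at h7 ⊢
    linarith
  have heq : ∀ n, preLimE g (u n) =
      ((if u n = 0 then g 0 else Function.leftLim g (u n).toReal : ℝ) : EReal) := by
    intro n
    by_cases h : u n = 0
    · rw [if_pos h, h, preLimE_zero]
    · rw [preLimE_of_ne g h (huT n), if_neg h]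
  have := EReal.tendsto_coe.mpr main
  exact this.congr (fun n => (heq n).symm)


/-- first passage "time" below level `-a` in the left-limit sense. -/
def sigmaFP (f : ℝ → ℝ) (a : EReal) : ℝ≥0∞ :=
  sInf {u : ℝ≥0∞ | u ≠ ⊤ ∧ preLimE f u ≤ -a}

lemma sigma_le {f : ℝ → ℝ} {a : EReal} {u : ℝ≥0∞} (h : u ≠ ⊤) (hle : preLimE f u ≤ -a) :
    sigmaFP f a ≤ u :=
  sInf_le ⟨h, hle⟩

lemma sigma_mono (f : ℝ → ℝ) {a b : EReal} (hab : a ≤ b) : sigmaFP f a ≤ sigmaFP f b :=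
  sInf_le_sInf (fun u hu => ⟨hu.1, le_trans hu.2 (EReal.neg_le_neg_iff.mpr hab)⟩)

lemma sigma_ne_top_real (f : ℝ → ℝ) {a : EReal} (h : sigmaFP f a ≠ ⊤) : a ≠ ⊤ := by
  intro ha
  apply h
  rw [sigmaFP]
  rw [show {u : ℝ≥0∞ | u ≠ ⊤ ∧ preLimE f u ≤ -a} = ∅ from ?_, sInf_empty]
  ext u
  simp only [Set.mem_setOf_eq, Set.mem_empty_iff_false, iff_false, not_and]
  intro hut hle
  obtain ⟨y, hy⟩ := preLimE_real f hut
  rw [hy, ha] at hle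
  simp only [EReal.neg_top, le_bot_iff] at hle
  exact EReal.coe_ne_bot y hle


lemma preLimE_sigma (hg0 : g 0 = 0)
    (hrc : ∀ t : ℝ, 0 ≤ t → ContinuousWithinAt g (Set.Ici t) t)
    (hll : ∀ t : ℝ, 0 < t → ∃ l, Tendsto g (𝓝[<] t) (𝓝 l))
    (hsf : ∀ t : ℝ, 0 < t → Function.leftLim g t ≤ g t)
    {a : EReal} (ha : 0 ≤ a) (h : sigmaFP g a ≠ ⊤) :
    preLimE g (sigmaFP g a) = -a := by
  have hat : a ≠ ⊤ := sigma_ne_top_real g h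
  have hab : a ≠ ⊥ := fun hb => by simp [hb] at ha
  set A : ℝ := a.toReal with hAdef
  have hA : (A : EReal) = a := EReal.coe_toReal hat hab
  have hA0 : 0 ≤ A := by
    rw [← EReal.coe_le_coe_iff (x := 0) (y := A), hA]
    exact_mod_cast ha
  set S := {u : ℝ≥0∞ | u ≠ ⊤ ∧ preLimE g u ≤ -a} with hSdef
  set σ := sigmaFP g a with hσdef
  have hσS' : σ = sInf S := rfl
  have hT0 : 0 ≤ σ.toReal := ENNReal.toReal_nonneg
  have step_lb : ∀ w : ℝ, 0 ≤ w → w < σ.toReal → -A ≤ g w := by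
    intro w hw hwT
    by_contra hcon
    push_neg at hcon
    have htd := tendsto_leftLim_gt hrc hll hw
    have hev1 : ∀ᶠ z in 𝓝[>] w, Function.leftLim g z < -A := htd (Iio_mem_nhds hcon)
    have hev2 : ∀ᶠ z in 𝓝[>] w, z ∈ Set.Ioo w σ.toReal :=
      eventually_mem_set.mpr (Ioo_mem_nhdsGT_of_mem ⟨le_refl w, hwT⟩)
    obtain ⟨z, hz1, hz2⟩ := (hev1.and hev2).exists
    have hz0 : 0 < z := lt_of_le_of_lt hw hz2.1
    have hle' : preLimE g (ENNReal.ofReal z) ≤ -a := by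
      rw [preLimE_of_ne g (ENNReal.ofReal_pos.mpr hz0).ne' ENNReal.ofReal_ne_top,
        ENNReal.toReal_ofReal hz0.le, ← hA, ← EReal.coe_neg, EReal.coe_le_coe_iff]
      exact hz1.le
    have h1 : σ ≤ ENNReal.ofReal z := by
      rw [hσS']
      exact sInf_le ⟨ENNReal.ofReal_ne_top, hle'⟩
    have h2 : ENNReal.ofReal z < σ := (ENNReal.ofReal_lt_iff_lt_toReal hz0.le h).mpr hz2.2
    exact absurd (lt_of_le_of_lt h1 h2) (lt_irrefl _)
  have step_ub : σ ∉ S → g σ.toReal ≤ -A := by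
    intro hσS
    by_contra hcon
    push_neg at hcon
    have htd := tendsto_leftLim_gt hrc hll hT0
    have hev1 : {z : ℝ | -A < Function.leftLim g z} ∈ 𝓝[>] σ.toReal := htd (Ioi_mem_nhds hcon)
    obtain ⟨δ, hδpos, hδ⟩ := Metric.mem_nhdsWithin_iff.mp hev1
    have hlt : sInf S < σ + ENNReal.ofReal δ := by
      rw [← hσS']
      exact ENNReal.lt_add_right h (ENNReal.ofReal_pos.mpr hδpos).ne'
    obtain ⟨v, hvS, hvlt⟩ := sInf_lt_iff.mp hlt
    have hvnt : v ≠ ⊤ := hvS.1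
    have hσv : σ < v := by
      have h1 : σ ≤ v := by rw [hσS']; exact sInf_le hvS
      exact lt_of_le_of_ne h1 (fun h' => hσS (h' ▸ hvS))
    have hTv : σ.toReal < v.toReal := (ENNReal.toReal_lt_toReal h hvnt).mpr hσv
    have hvT : v.toReal < σ.toReal + δ := by
      have h1 : v.toReal < (σ + ENNReal.ofReal δ).toReal :=
        (ENNReal.toReal_lt_toReal hvnt (ENNReal.add_ne_top.mpr ⟨h, ENNReal.ofReal_ne_top⟩)).mpr hvlt
      rwa [ENNReal.toReal_add h ENNReal.ofReal_ne_top, ENNReal.toReal_ofReal hδpos.le] at h1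
    have hv0 : v ≠ 0 := by
      intro h0
      rw [h0] at hTv
      simp only [ENNReal.toReal_zero] at hTv
      linarith
    have hmem := hvS.2
    rw [preLimE_of_ne g hv0 hvnt, ← hA, ← EReal.coe_neg, EReal.coe_le_coe_iff] at hmem
    have hball : v.toReal ∈ Metric.ball σ.toReal δ ∩ Set.Ioi σ.toReal := by
      refine ⟨?_, hTv⟩
      rw [Metric.mem_ball, Real.dist_eq, abs_of_nonneg (by linarith)]
      linarith
    have h9 : -A < Function.leftLim g v.toReal := hδ hball
    linarith
  rcases eq_or_ne σ 0 with hσ0 | hσ0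
  · have hAneg : (0:ℝ) ≤ -A := by
      by_cases hσS : σ ∈ S
      · have h5 := hσS.2
        rw [hσ0, preLimE_zero, hg0, ← hA, ← EReal.coe_neg] at h5
        exact_mod_cast h5
      · have h5 := step_ub hσS
        rw [hσ0] at h5
        simp only [ENNReal.toReal_zero] at h5
        rw [hg0] at h5
        exact h5
    have hAz : A = 0 := le_antisymm (by linarith) hA0
    rw [hσ0, preLimE_zero, hg0, ← hA, ← EReal.coe_neg, EReal.coe_eq_coe_iff, hAz]
    norm_num
  · have hTpos : 0 < σ.toReal := ENNReal.toReal_pos hσ0 h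
    rw [preLimE_of_ne g hσ0 h, ← hA, ← EReal.coe_neg, EReal.coe_eq_coe_iff]
    have hge : -A ≤ Function.leftLim g σ.toReal := by
      apply ge_of_tendsto (tendsto_ll hll hTpos)
      filter_upwards [Ioo_mem_nhdsLT_of_mem
        (⟨hTpos, le_refl _⟩ : σ.toReal ∈ Set.Ioc 0 σ.toReal)] with z hz
      exact step_lb z hz.1.le hz.2
    have hle : Function.leftLim g σ.toReal ≤ -A := by
      by_cases hσS : σ ∈ S
      · have h5 := hσS.2
        rwa [preLimE_of_ne g hσ0 h, ← hA, ← EReal.coe_neg, EReal.coe_le_coe_iff] at h5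
      · exact le_trans (hsf _ hTpos) (step_ub hσS)
    exact le_antisymm hle hge


variable {d : ℕ} {x : Fin d → Fin d → ℝ → ℝ}

lemma extract (hx : MemE d x) (i : Fin d) (t : Fin d → ℝ≥0∞) (hti : t i ≠ ⊤)
    {c : ℝ} (heq : (c : EReal) + ∑ j, preLimE (x i j) (t j) = 0) :
    ∃ p : Fin d → ℝ, (∀ j, preLimE (x i j) (t j) = (p j : EReal)) ∧
      (c + ∑ j, p j = 0) ∧ (∀ j, j ≠ i → 0 ≤ p j) := by
  have hnn : ∀ j, j ≠ i → 0 ≤ preLimE (x i j) (t j) := fun j hj =>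
    preLimE_nonneg (hx.zero i j) (hx.mono i j (Ne.symm hj)) (hx.leftLimEx i j) (t j)
  have hfin : ∀ j, ∃ y : ℝ, preLimE (x i j) (t j) = (y : EReal) := by
    intro j
    by_cases hj : j = i
    · subst hj; exact preLimE_real _ hti
    · rcases eq_or_ne (preLimE (x i j) (t j)) ⊤ with hPt | hPt
      · exfalso
        have h1 : ∑ k ∈ Finset.univ.erase i, preLimE (x i k) (t k) = ⊤ := by
          apply top_le_iff.mp
          rw [← hPt]
          exact Finset.single_le_sum (f := fun k => preLimE (x i k) (t k))
            (fun k hk => hnn k (Finset.ne_of_mem_erase hk))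
            (Finset.mem_erase.mpr ⟨hj, Finset.mem_univ j⟩)
        obtain ⟨y, hy⟩ := preLimE_real (x i i) hti
        have h2 : ∑ k, preLimE (x i k) (t k) = ⊤ := by
          rw [← Finset.add_sum_erase _ _ (Finset.mem_univ i), h1, hy, EReal.coe_add_top]
        rw [h2] at heq
        rw [EReal.coe_add_top] at heq
        exact EReal.top_ne_zero heq
      · have hPb : preLimE (x i j) (t j) ≠ ⊥ := by
          intro hb
          have := hnn j hj
          rw [hb] at this
          exact absurd this (by simp)
        exact ⟨(preLimE (x i j) (t j)).toReal, (EReal.coe_toReal hPt hPb).symm⟩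
  choose p hp using hfin
  refine ⟨p, hp, ?_, ?_⟩
  · have h3 : ((c + ∑ j, p j : ℝ) : EReal) = 0 := by
      rw [EReal.coe_add, coe_sum]
      rw [← heq]
      congr 1
      exact Finset.sum_congr rfl (fun j _ => (hp j).symm)
    exact_mod_cast h3
  · intro j hj
    have := hnn j hj
    rw [hp j] at this
    exact_mod_cast this

def aFP (d : ℕ) (x : Fin d → Fin d → ℝ → ℝ) (r : Fin d → ℝ) (i : Fin d)
    (t : Fin d → ℝ≥0∞) : EReal :=
  (r i : EReal) + ∑ j ∈ Finset.univ.erase i, preLimE (x i j) (t j)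

def PhiFP (d : ℕ) (x : Fin d → Fin d → ℝ → ℝ) (r : Fin d → ℝ)
    (t : Fin d → ℝ≥0∞) : Fin d → ℝ≥0∞ :=
  fun i => sigmaFP (x i i) (aFP d x r i t)

lemma aFP_nonneg (hx : MemE d x) {r : Fin d → ℝ} (hr : ∀ i, 0 ≤ r i) (i : Fin d)
    (t : Fin d → ℝ≥0∞) : 0 ≤ aFP d x r i t := by
  apply add_nonneg
  · exact_mod_cast hr i
  · exact Finset.sum_nonneg fun j hj =>
      preLimE_nonneg (hx.zero i j) (hx.mono i j (Ne.symm (Finset.ne_of_mem_erase hj)))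
        (hx.leftLimEx i j) (t j)

lemma aFP_mono (hx : MemE d x) (r : Fin d → ℝ) (i : Fin d)
    {t t' : Fin d → ℝ≥0∞} (h : t ≤ t') : aFP d x r i t ≤ aFP d x r i t' := by
  apply add_le_add_right
  apply Finset.sum_le_sum
  intro j hj
  exact preLimE_mono (hx.zero i j) (hx.mono i j (Ne.symm (Finset.ne_of_mem_erase hj)))
    (hx.leftLimEx i j) (h j)

lemma phi_mono (hx : MemE d x) (r : Fin d → ℝ)
    {t t' : Fin d → ℝ≥0∞} (h : t ≤ t') : PhiFP d x r t ≤ PhiFP d x r t' :=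
  fun i => sigma_mono _ (aFP_mono hx r i h)

lemma phi_le_solution (hx : MemE d x) {r r' : Fin d → ℝ} (hle : ∀ i, r' i ≤ r i)
    {t : Fin d → ℝ≥0∞} (ht : IsSolution d x r t) :
    PhiFP d x r' t ≤ t := by
  intro i
  by_cases hti : t i = ⊤
  · rw [hti]; exact le_top
  obtain ⟨p, hp1, hp2, hp3⟩ := extract hx i t hti (ht i hti)
  apply sInf_le
  refine ⟨hti, ?_⟩
  rw [hp1 i]
  have hsum : aFP d x r' i t = (((r' i) + ∑ j ∈ Finset.univ.erase i, p j : ℝ) : EReal) := by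
    rw [aFP, EReal.coe_add, coe_sum]
    congr 1
    exact Finset.sum_congr rfl (fun j _ => hp1 j)
  rw [hsum, ← EReal.coe_neg, EReal.coe_le_coe_iff]
  have h2 : r i + (p i + ∑ j ∈ Finset.univ.erase i, p j) = 0 := by
    rw [Finset.add_sum_erase _ p (Finset.mem_univ i)]
    exact hp2
  have := hle i
  linarith

lemma limit_eq (hx : MemE d x) (i : Fin d) {u : ℕ → Fin d → ℝ≥0∞} (hu : Monotone u)
    (hUi : (⨆ n, u n i) ≠ ⊤) {c : ℕ → ℝ} {C : ℝ} (hc : Tendsto c atTop (𝓝 C))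
    (heq : ∀ n, (c n : EReal) + ∑ j, preLimE (x i j) (u n j) = 0) :
    (C : EReal) + ∑ j, preLimE (x i j) (⨆ n, u n j) = 0 := by
  have hmono_j : ∀ j, Monotone fun n => u n j := fun j a b h => hu h j
  have huni : ∀ n, u n i ≠ ⊤ := fun n =>
    ne_top_of_le_ne_top hUi (le_iSup (fun n => u n i) n)
  choose p hp1 hp2 hp3 using fun n => extract hx i (u n) (huni n) (heq n)
  obtain ⟨Q, hQ⟩ := preLimE_real (x i i) hUi
  have hdiag : Tendsto (fun n => preLimE (x i i) (u n i)) atTop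
      (𝓝 (preLimE (x i i) (⨆ n, u n i))) :=
    preLimE_tendsto_ne_top (hx.leftLimEx i i) (hmono_j i) hUi
  have hdiagR : Tendsto (fun n => p n i) atTop (𝓝 Q) := by
    apply EReal.tendsto_coe.mp
    have h1 : (fun n => ((p n i : ℝ) : EReal)) = fun n => preLimE (x i i) (u n i) := by
      funext n; exact (hp1 n i).symm
    rw [h1, ← hQ]
    exact hdiag
  have hbdd : BddAbove (Set.range fun n => -c n - p n i) :=
    Filter.Tendsto.bddAbove_range (hc.neg.sub hdiagR)
  have hle_sum : ∀ n, ∀ j, j ≠ i → p n j ≤ -c n - p n i := by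
    intro n j hj
    have h1 : p n j ≤ ∑ k ∈ Finset.univ.erase i, p n k :=
      Finset.single_le_sum (fun k hk => hp3 n k (Finset.ne_of_mem_erase hk))
        (Finset.mem_erase.mpr ⟨hj, Finset.mem_univ j⟩)
    have h2 : p n i + ∑ k ∈ Finset.univ.erase i, p n k = ∑ k, p n k :=
      Finset.add_sum_erase _ _ (Finset.mem_univ i)
    have h3 := hp2 n
    linarith
  have key : ∀ j, ∃ Lj : ℝ, Tendsto (fun n => p n j) atTop (𝓝 Lj) ∧
      preLimE (x i j) (⨆ n, u n j) = (Lj : EReal) := by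
    intro j
    by_cases hj : j = i
    · subst hj; exact ⟨Q, hdiagR, hQ⟩
    · have hmonop : Monotone fun n => p n j := by
        intro a b hab
        have h4 := preLimE_mono (hx.zero i j) (hx.mono i j (Ne.symm hj)) (hx.leftLimEx i j)
          (hmono_j j hab)
        rw [hp1 a j, hp1 b j] at h4
        exact_mod_cast h4
      have hb : BddAbove (Set.range fun n => p n j) := by
        obtain ⟨M, hM⟩ := hbdd
        refine ⟨M, ?_⟩
        rintro _ ⟨n, rfl⟩
        exact le_trans (hle_sum n j hj) (hM ⟨n, rfl⟩)
      refine ⟨⨆ n, p n j, tendsto_atTop_ciSup hmonop hb, ?_⟩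
      rw [preLimE_iSup (hx.zero i j) (hx.mono i j (Ne.symm hj)) (hx.leftLimEx i j) (hmono_j j)]
      have t1 : Tendsto (fun n => preLimE (x i j) (u n j)) atTop
          (𝓝 (⨆ n, preLimE (x i j) (u n j))) :=
        tendsto_atTop_iSup (fun a b hab =>
          preLimE_mono (hx.zero i j) (hx.mono i j (Ne.symm hj)) (hx.leftLimEx i j)
            (hmono_j j hab))
      have t2 : Tendsto (fun n => preLimE (x i j) (u n j)) atTop
          (𝓝 ((⨆ n, p n j : ℝ) : EReal)) := by
        have h5 : (fun n => preLimE (x i j) (u n j)) = fun n => ((p n j : ℝ) : EReal) := by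
          funext n; exact hp1 n j
        rw [h5]
        exact EReal.tendsto_coe.mpr (tendsto_atTop_ciSup hmonop hb)
      exact tendsto_nhds_unique t1 t2
  choose L hL1 hL2 using key
  have hsum : Tendsto (fun n => c n + ∑ j, p n j) atTop (𝓝 (C + ∑ j, L j)) :=
    hc.add (tendsto_finset_sum _ fun j _ => hL1 j)
  have h0 : Tendsto (fun n => c n + ∑ j, p n j) atTop (𝓝 (0 : ℝ)) := by
    have h6 : (fun n => c n + ∑ j, p n j) = fun _ => (0:ℝ) := by
      funext n; exact hp2 n
    rw [h6]
    exact tendsto_const_nhds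
  have hfinal : C + ∑ j, L j = 0 := tendsto_nhds_unique hsum h0
  calc (C : EReal) + ∑ j, preLimE (x i j) (⨆ n, u n j)
      = (C : EReal) + ∑ j, ((L j : ℝ) : EReal) := by
        congr 1
        exact Finset.sum_congr rfl fun j _ => hL2 j
    _ = ((C + ∑ j, L j : ℝ) : EReal) := by rw [EReal.coe_add, coe_sum]
    _ = 0 := by rw [hfinal]; exact EReal.coe_zero

lemma iterate_solution (hx : MemE d x) {r' : Fin d → ℝ} (hr'0 : ∀ i, 0 ≤ r' i)
    (t : ℕ → Fin d → ℝ≥0∞) (ht0 : t 0 = fun _ => 0)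
    (htS : ∀ n, t (n + 1) = PhiFP d x r' (t n)) :
    IsSolution d x r' fun j => ⨆ n, t n j := by
  have hstep : ∀ n, t n ≤ t (n + 1) := by
    intro n
    induction n with
    | zero => rw [ht0]; intro i; exact zero_le
    | succ n ih =>
      rw [htS (n + 1)]
      exact le_of_eq_of_le (htS n) (phi_mono hx r' ih)
  have hmono : Monotone t := monotone_nat_of_le_succ hstep
  intro i hti
  simp only at hti
  have hti' : ∀ n, t n i ≠ ⊤ := fun n =>
    ne_top_of_le_ne_top hti (le_iSup (fun n => t n i) n)
  set u : ℕ → Fin d → ℝ≥0∞ := fun n => Function.update (t n) i (t (n + 1) i) with hudef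
  have hu_mono : Monotone u := by
    intro a b hab j
    by_cases hj : j = i
    · subst hj
      simp only [hudef, Function.update_self]
      exact hmono (Nat.succ_le_succ hab) j
    · simp only [hudef, Function.update_of_ne hj]
      exact hmono hab j
  have hui : ∀ n, u n i = t (n + 1) i := fun n => Function.update_self _ _ _
  have huj : ∀ n j, j ≠ i → u n j = t n j := fun n j hj => Function.update_of_ne hj _ _
  have hsup_shift : (⨆ n, t (n + 1) i) = ⨆ n, t n i := by
    apply le_antisymm
    · exact iSup_le fun n => le_iSup (fun n => t n i) (n + 1)
    · exact iSup_le fun n => le_trans (hstep n i) (le_iSup (fun n => t (n + 1) i) n)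
  have hUi : (⨆ n, u n i) ≠ ⊤ := by
    simp only [hui, hsup_shift]
    exact hti
  have heqn : ∀ n, ((r' i : ℝ) : EReal) + ∑ j, preLimE (x i j) (u n j) = 0 := by
    intro n
    have hσ : t (n + 1) i = sigmaFP (x i i) (aFP d x r' i (t n)) := by rw [htS n]; rfl
    have hne : sigmaFP (x i i) (aFP d x r' i (t n)) ≠ ⊤ := hσ ▸ hti' (n + 1)
    have ha0 : 0 ≤ aFP d x r' i (t n) := aFP_nonneg hx hr'0 i (t n)
    have hkey := preLimE_sigma (hx.zero i i) (hx.rightCont i i) (hx.leftLimEx i i)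
      (hx.skipFree i) ha0 hne
    have hat : aFP d x r' i (t n) ≠ ⊤ := sigma_ne_top_real _ hne
    -- the off-diagonal sum is a real number
    set Ssum : EReal := ∑ j ∈ Finset.univ.erase i, preLimE (x i j) (t n j) with hSsum
    have hS0 : 0 ≤ Ssum := Finset.sum_nonneg fun j hj =>
      preLimE_nonneg (hx.zero i j) (hx.mono i j (Ne.symm (Finset.ne_of_mem_erase hj)))
        (hx.leftLimEx i j) (t n j)
    have hSt : Ssum ≠ ⊤ := by
      intro hS
      apply hat
      rw [aFP, ← hSsum, hS, EReal.coe_add_top]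
    have hSb : Ssum ≠ ⊥ := fun hS => by simp [hS] at hS0
    set sv : ℝ := Ssum.toReal with hsv
    have hsv' : (sv : EReal) = Ssum := EReal.coe_toReal hSt hSb
    have haval : aFP d x r' i (t n) = ((r' i + sv : ℝ) : EReal) := by
      rw [aFP, ← hSsum, ← hsv', EReal.coe_add]
    -- split the sum
    have hsplit : ∑ j, preLimE (x i j) (u n j)
        = preLimE (x i i) (u n i) + ∑ j ∈ Finset.univ.erase i, preLimE (x i j) (u n j) :=
      (Finset.add_sum_erase _ _ (Finset.mem_univ i)).symm
    have herase : ∑ j ∈ Finset.univ.erase i, preLimE (x i j) (u n j) = Ssum := by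
      rw [hSsum]
      exact Finset.sum_congr rfl fun j hj => by rw [huj n j (Finset.ne_of_mem_erase hj)]
    have hdiagval : preLimE (x i i) (u n i) = ((-(r' i + sv) : ℝ) : EReal) := by
      rw [hui n, hσ, hkey, haval, EReal.coe_neg]
    rw [hsplit, herase, hdiagval, ← hsv', ← EReal.coe_add, ← EReal.coe_add]
    norm_num
  have hfin := limit_eq hx i hu_mono hUi (c := fun _ => r' i) (C := r' i)
    tendsto_const_nhds heqn
  have hconv : ∀ j, (⨆ n, u n j) = ⨆ n, t n j := by
    intro j
    by_cases hj : j = i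
    · subst hj
      simp only [hui]
      exact hsup_shift
    · simp only [huj _ j hj]
  rw [show (∑ j, preLimE (x i j) (⨆ n, t n j)) = ∑ j, preLimE (x i j) (⨆ n, u n j) from
    Finset.sum_congr rfl fun j _ => by rw [hconv j]] at *
  exact hfin

lemma smallest_mono (hx : MemE d x) {r r' : Fin d → ℝ} (hr : ∀ i, 0 ≤ r i)
    (hr'0 : ∀ i, 0 ≤ r' i) (hle : ∀ i, r' i ≤ r i) {s s' : Fin d → ℝ≥0∞}
    (hs : IsSmallestSolution d x r s) (hs' : IsSmallestSolution d x r' s') :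
    s' ≤ s := by
  set t : ℕ → Fin d → ℝ≥0∞ := fun n => (fun v => PhiFP d x r' v)^[n] (fun _ => 0) with htdef
  have ht0 : t 0 = fun _ => 0 := rfl
  have htS : ∀ n, t (n + 1) = PhiFP d x r' (t n) := fun n =>
    Function.iterate_succ_apply' _ n _
  have hsol := iterate_solution hx hr'0 t ht0 htS
  have h1 : s' ≤ fun j => ⨆ n, t n j := hs'.2 _ hsol
  have h2 : ∀ n, t n ≤ s := by
    intro n
    induction n with
    | zero => rw [ht0]; intro i; exact zero_le
    | succ n ih =>
      rw [htS n]
      exact le_trans (phi_mono hx r' ih) (phi_le_solution hx hle hs.1)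
  refine le_trans h1 ?_
  intro j
  exact iSup_le fun n => h2 n j

end FPAux

/-- monotonicity and left-continuity of smallest solutions in the level `r`.
If `r' ≤ r` then the smallest solutions satisfy `s' ≤ s`; and if `rseq` is a nondecreasing
sequence of levels converging to `r`, the corresponding smallest solutions converge to `s`. -/
theorem smallest_solution_monotone_and_continuous (d : ℕ) (hd : 1 ≤ d)
    (x : Fin d → Fin d → ℝ → ℝ) (hx : MemE d x)
    (r : Fin d → ℝ) (hr : ∀ i, 0 ≤ r i)
    (s : Fin d → ℝ≥0∞) (hs : IsSmallestSolution d x r s) :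
    (∀ (r' : Fin d → ℝ) (s' : Fin d → ℝ≥0∞), (∀ i, 0 ≤ r' i) → (∀ i, r' i ≤ r i) →
        IsSmallestSolution d x r' s' → s' ≤ s) ∧
    (∀ (rseq : ℕ → Fin d → ℝ) (sseq : ℕ → Fin d → ℝ≥0∞),
        (∀ n i, 0 ≤ rseq n i) → Monotone rseq →
        Filter.Tendsto rseq Filter.atTop (nhds r) →
        (∀ n, IsSmallestSolution d x (rseq n) (sseq n)) →
        Filter.Tendsto sseq Filter.atTop (nhds s)) := by
  constructor
  · intro r' s' hr'0 hr'le hs'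
    exact FPAux.smallest_mono hx hr hr'0 hr'le hs hs'
  · intro rseq sseq hrses hrmono hrtend hss
    have hrtend_i : ∀ i, Tendsto (fun n => rseq n i) atTop (𝓝 (r i)) := fun i =>
      ((continuous_apply i).tendsto r).comp hrtend
    have hrle : ∀ n i, rseq n i ≤ r i := fun n i =>
      Monotone.ge_of_tendsto (fun a b hab => hrmono hab i) (hrtend_i i) n
    have hs_le : ∀ n, sseq n ≤ s := fun n =>
      FPAux.smallest_mono hx hr (hrses n) (fun i => hrle n i) hs (hss n)
    have hsmono : Monotone sseq := fun a b hab =>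
      FPAux.smallest_mono hx (hrses b) (hrses a) (fun i => hrmono hab i) (hss b) (hss a)
    set S : Fin d → ℝ≥0∞ := fun j => ⨆ n, sseq n j with hSdef
    have hSsol : IsSolution d x r S := by
      intro i hSi
      exact FPAux.limit_eq hx i hsmono hSi (hrtend_i i) (fun n =>
        (hss n).1 i (ne_top_of_le_ne_top hSi (le_iSup (fun n => sseq n i) n)))
    have hS_le_s : S ≤ s := fun j => iSup_le fun n => hs_le n j
    have hs_le_S : s ≤ S := hs.2 S hSsol
    have hSeq : S = s := le_antisymm hS_le_s hs_le_S
    rw [tendsto_pi_nhds]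
    intro j
    have h1 : Tendsto (fun n => sseq n j) atTop (𝓝 (S j)) :=
      tendsto_atTop_iSup fun a b hab => hsmono hab j
    rw [hSeq] at h1
    exact h1

end
end

section
/- Let x ∈ E_d, r ∈ ℝ₊^d, and let s be the smallest solution of the system (r, x). If u ∈ [0,∞]^d is such that Σ_{j=1}^d x^{i,j}(u_j−) ≤ −r_i for all i ∈ [d]_u, then u ≥ s. Consequently, for every u ∈ ℝ₊^d with u < s (i.e. u ≤ s and u ≠ s), there exists i ∈ [d] such that Σ_{j=1}^d x^{i,j}(u_j−) > −r_i. -/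
open Filter Topology Set
open scoped ENNReal

noncomputable section

lemma preLimE_zero (f : ℝ → ℝ) : preLimE f 0 = (f 0 : EReal) := if_pos rfl

lemma preLimE_of_ne {t : ℝ≥0∞} (h0 : t ≠ 0) (ht : t ≠ ⊤) (f : ℝ → ℝ) :
    preLimE f t = ((Function.leftLim f t.toReal : ℝ) : EReal) := by
  simp [preLimE, h0, ht]

lemma preLimE_real {t : ℝ≥0∞} (ht : t ≠ ⊤) (f : ℝ → ℝ) :
    ∃ c : ℝ, preLimE f t = (c : EReal) := by
  rcases eq_or_ne t 0 with h | h
  · exact ⟨f 0, by rw [h, preLimE_zero]⟩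
  · exact ⟨_, preLimE_of_ne h ht f⟩

lemma leftLim_tendsto_of_ex {f : ℝ → ℝ} {t : ℝ}
    (hl : ∃ l, Tendsto f (𝓝[<] t) (𝓝 l)) :
    Tendsto f (𝓝[<] t) (𝓝 (Function.leftLim f t)) := by
  obtain ⟨l, hl⟩ := hl
  rwa [leftLim_eq_of_tendsto hl]

lemma passage_le {f : ℝ → ℝ}
    (hrc : ∀ t : ℝ, 0 ≤ t → ContinuousWithinAt f (Set.Ici t) t)
    (hll : ∀ t : ℝ, 0 < t → ∃ l, Tendsto f (𝓝[<] t) (𝓝 l))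
    (hsf : ∀ t : ℝ, 0 < t → Function.leftLim f t ≤ f t)
    {L : EReal} {T : ℝ≥0∞}
    (hT : sInf {t : ℝ≥0∞ | preLimE f t ≤ L} = T) (hTfin : T ≠ ⊤) :
    preLimE f T ≤ L := by
  by_cases hmem : preLimE f T ≤ L
  · exact hmem
  rcases eq_or_ne L ⊤ with rfl | hLtop
  · exact le_top
  -- members of S strictly above T, close to T
  have key : ∀ δ : ℝ, 0 < δ → ∃ t' : ℝ, T.toReal < t' ∧ t' < T.toReal + δ ∧
      ((Function.leftLim f t' : ℝ) : EReal) ≤ L := by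
    intro δ hδ
    have h1 : sInf {t : ℝ≥0∞ | preLimE f t ≤ L} < T + ENNReal.ofReal δ := by
      rw [hT]
      exact ENNReal.lt_add_right hTfin (by simpa using hδ.not_ge)
    obtain ⟨t, htS, htlt⟩ := sInf_lt_iff.1 h1
    have httop : t ≠ ⊤ := ne_top_of_lt htlt
    have httop2 : t ≠ ⊤ := httop
    have htT : T < t := lt_of_le_of_ne (hT ▸ sInf_le htS) (fun h => hmem (h ▸ htS))
    have ht0 : t ≠ 0 := by
      intro h
      rw [h] at htT
      exact (not_lt_of_ge (zero_le (a := T))) htT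
    refine ⟨t.toReal, ?_, ?_, ?_⟩
    · exact (ENNReal.toReal_lt_toReal hTfin httop).2 htT
    · have := (ENNReal.toReal_lt_toReal httop
        (ENNReal.add_ne_top.2 ⟨hTfin, ENNReal.ofReal_ne_top⟩)).2 htlt
      rwa [ENNReal.toReal_add hTfin ENNReal.ofReal_ne_top,
        ENNReal.toReal_ofReal hδ.le] at this
    · rw [← preLimE_of_ne ht0 httop]; exact htS
  have hLbot : L ≠ ⊥ := by
    intro hL
    obtain ⟨t', _, _, hle⟩ := key 1 one_pos
    rw [hL, le_bot_iff] at hle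
    exact EReal.coe_ne_bot _ hle
  lift L to ℝ using ⟨hLtop, hLbot⟩ with Lr
  set T' := T.toReal with hT'
  have hT'0 : 0 ≤ T' := ENNReal.toReal_nonneg
  have hfT' : f T' ≤ Lr := by
    by_contra hgt
    push_neg at hgt
    set ε := (f T' - Lr) / 2 with hε
    have hεpos : 0 < ε := by simp [hε]; linarith
    have hev : f ⁻¹' (Set.Ioi (f T' - ε)) ∈ 𝓝[≥] T' :=
      (hrc T' hT'0) (Ioi_mem_nhds (by linarith))
    obtain ⟨δ, hδ, hball⟩ := Metric.mem_nhdsWithin_iff.1 hev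
    obtain ⟨t', ht'1, ht'2, ht'3⟩ := key δ hδ
    have htend : Tendsto f (𝓝[<] t') (𝓝 (Function.leftLim f t')) :=
      leftLim_tendsto_of_ex (hll t' (lt_of_le_of_lt hT'0 ht'1))
    have hge : f T' - ε ≤ Function.leftLim f t' := by
      refine ge_of_tendsto htend ?_
      filter_upwards [Ioo_mem_nhdsLT ht'1] with s hs
      have hmem2 : s ∈ Metric.ball T' δ ∩ Set.Ici T' := by
        constructor
        · rw [Metric.mem_ball, Real.dist_eq, abs_lt]
          constructor <;> [linarith [hs.1, hs.2]; linarith [hs.1, hs.2]]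
        · exact le_of_lt hs.1
      exact le_of_lt (hball hmem2)
    have hle : Function.leftLim f t' ≤ Lr := by exact_mod_cast ht'3
    have : f T' ≤ Lr + ε := by linarith
    rw [hε] at this; linarith
  rcases eq_or_ne T 0 with rfl | hT0
  · rw [preLimE_zero]
    have : T' = (0:ℝ≥0∞).toReal := rfl
    exact_mod_cast (by simpa [hT'] using hfT' : f 0 ≤ Lr)
  · rw [preLimE_of_ne hT0 hTfin]
    have hT'pos : 0 < T' := ENNReal.toReal_pos hT0 hTfin
    exact_mod_cast (hsf T' hT'pos).trans hfT'

lemma passage_ge {f : ℝ → ℝ}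
    (hrc : ∀ t : ℝ, 0 ≤ t → ContinuousWithinAt f (Set.Ici t) t)
    (hll : ∀ t : ℝ, 0 < t → ∃ l, Tendsto f (𝓝[<] t) (𝓝 l))
    (hsf : ∀ t : ℝ, 0 < t → Function.leftLim f t ≤ f t)
    (hf0 : f 0 = 0)
    {L : EReal} (hL0 : L ≤ 0) {T : ℝ≥0∞}
    (hT : sInf {t : ℝ≥0∞ | preLimE f t ≤ L} = T) (hTfin : T ≠ ⊤) :
    L ≤ preLimE f T := by
  have hle := passage_le hrc hll hsf hT hTfin
  obtain ⟨c, hc⟩ := preLimE_real hTfin f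
  have hLbot : L ≠ ⊥ := by
    intro hL
    rw [hL, le_bot_iff, hc] at hle
    exact EReal.coe_ne_bot c hle
  have hLtop : L ≠ ⊤ := fun h => by simp [h] at hL0
  lift L to ℝ using ⟨hLtop, hLbot⟩ with Lr
  have hLr0 : Lr ≤ 0 := by exact_mod_cast hL0
  have claim : ∀ a : ℝ, 0 ≤ a → ENNReal.ofReal a < T → Lr ≤ f a := by
    intro a ha haT
    by_contra hfa
    push_neg at hfa
    have hev : f ⁻¹' (Set.Iio Lr) ∈ 𝓝[≥] a := (hrc a ha) (Iio_mem_nhds hfa)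
    obtain ⟨δ, hδ, hball⟩ := Metric.mem_nhdsWithin_iff.1 hev
    obtain ⟨ρ, hρ0, haρ, hρT⟩ := ENNReal.lt_iff_exists_real_btwn.1 haT
    have haρ' : a < ρ := by
      by_contra h
      push_neg at h
      exact absurd haρ (not_lt.2 (ENNReal.ofReal_le_ofReal h))
    set t' := min ρ (a + δ/2) with ht'def
    have h1 : a < t' := lt_min haρ' (by linarith)
    have h2 : t' < a + δ := lt_of_le_of_lt (min_le_right _ _) (by linarith)
    have ht'pos : 0 < t' := lt_of_le_of_lt ha h1
    have hmemS : ENNReal.ofReal t' ∈ {t : ℝ≥0∞ | preLimE f t ≤ ((Lr : ℝ) : EReal)} := by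
      have hne0 : ENNReal.ofReal t' ≠ 0 := by
        simp [ENNReal.ofReal_eq_zero, not_le, ht'pos]
      rw [Set.mem_setOf_eq, preLimE_of_ne hne0 ENNReal.ofReal_ne_top,
        ENNReal.toReal_ofReal ht'pos.le]
      have htend : Tendsto f (𝓝[<] t') (𝓝 (Function.leftLim f t')) :=
        leftLim_tendsto_of_ex (hll t' ht'pos)
      have hlim : Function.leftLim f t' ≤ Lr := by
        refine le_of_tendsto htend ?_
        filter_upwards [Ioo_mem_nhdsLT h1] with s hs
        have hmem2 : s ∈ Metric.ball a δ ∩ Set.Ici a := by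
          refine ⟨?_, le_of_lt hs.1⟩
          rw [Metric.mem_ball, Real.dist_eq, abs_lt]
          constructor <;> [linarith [hs.1, hs.2]; linarith [hs.1, hs.2]]
        exact le_of_lt (hball hmem2)
      exact_mod_cast hlim
    have hTle : T ≤ ENNReal.ofReal t' := hT ▸ sInf_le hmemS
    have : T ≤ ENNReal.ofReal ρ :=
      hTle.trans (ENNReal.ofReal_le_ofReal (min_le_left _ _))
    exact absurd hρT (not_lt.2 this)
  rcases eq_or_ne T 0 with rfl | hT0
  · rw [preLimE_zero, hf0]
    exact_mod_cast hL0
  · rw [preLimE_of_ne hT0 hTfin]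
    have hT'pos : 0 < T.toReal := ENNReal.toReal_pos hT0 hTfin
    have htend : Tendsto f (𝓝[<] T.toReal) (𝓝 (Function.leftLim f T.toReal)) :=
      leftLim_tendsto_of_ex (hll _ hT'pos)
    have hlim : Lr ≤ Function.leftLim f T.toReal := by
      refine ge_of_tendsto htend ?_
      filter_upwards [Ioo_mem_nhdsLT hT'pos] with s hs
      refine claim s hs.1.le ?_
      rw [ENNReal.ofReal_lt_iff_lt_toReal hs.1.le hTfin]
      exact hs.2
    exact_mod_cast hlim

lemma preLimE_top (f : ℝ → ℝ) :
    preLimE f ⊤ = Filter.limsup (fun s : ℝ => (f s : EReal)) Filter.atTop := by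
  simp [preLimE]

variable {d : ℕ} {x : Fin d → Fin d → ℝ → ℝ}

lemma off_nonneg (hx : MemE d x) {i j : Fin d} (hij : i ≠ j) (t : ℝ≥0∞) :
    (0 : EReal) ≤ preLimE (x i j) t := by
  have hxnn : ∀ s : ℝ, 0 ≤ s → 0 ≤ x i j s := fun s hs => by
    have := hx.mono i j hij (Set.self_mem_Ici) hs hs
    rwa [hx.zero i j] at this
  rcases eq_or_ne t 0 with rfl | h0
  · rw [preLimE_zero, hx.zero i j]
    exact le_refl _
  rcases eq_or_ne t ⊤ with rfl | htop
  · rw [preLimE_top]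
    have h1 : (0:EReal) = limsup (fun _ : ℝ => (0:EReal)) atTop := (limsup_const _).symm
    rw [h1]
    refine limsup_le_limsup ?_
    filter_upwards [eventually_ge_atTop (0:ℝ)] with s hs
    exact_mod_cast hxnn s hs
  · rw [preLimE_of_ne h0 htop]
    have hT'pos : 0 < t.toReal := ENNReal.toReal_pos h0 htop
    have htend := leftLim_tendsto_of_ex (hx.leftLimEx i j _ hT'pos)
    have h2 : (0:ℝ) ≤ Function.leftLim (x i j) t.toReal := by
      refine ge_of_tendsto htend ?_
      filter_upwards [Ioo_mem_nhdsLT hT'pos] with s hs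
      exact hxnn s hs.1.le
    exact_mod_cast h2

lemma off_mono (hx : MemE d x) {i j : Fin d} (hij : i ≠ j) :
    Monotone (fun t => preLimE (x i j) t) := by
  intro t1 t2 h
  simp only []
  rcases eq_or_lt_of_le h with rfl | hlt
  · exact le_refl _
  rcases eq_or_ne t1 0 with rfl | h10
  · rw [preLimE_zero, hx.zero i j]
    exact_mod_cast off_nonneg hx hij t2
  have h1top : t1 ≠ ⊤ := ne_top_of_lt hlt
  have h1pos : 0 < t1.toReal := ENNReal.toReal_pos h10 h1top
  have htend1 := leftLim_tendsto_of_ex (hx.leftLimEx i j _ h1pos)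
  -- leftLim at t1.toReal ≤ x i j t1.toReal
  have hstep1 : Function.leftLim (x i j) t1.toReal ≤ x i j t1.toReal := by
    refine le_of_tendsto htend1 ?_
    filter_upwards [Ioo_mem_nhdsLT h1pos] with s hs
    exact hx.mono i j hij hs.1.le h1pos.le hs.2.le
  rcases eq_or_ne t2 ⊤ with rfl | h2top
  · rw [preLimE_of_ne h10 h1top, preLimE_top]
    have hstep2 : ((x i j t1.toReal : ℝ) : EReal) ≤
        limsup (fun s : ℝ => (x i j s : EReal)) atTop := by
      have hc : ((x i j t1.toReal : ℝ) : EReal)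
          = limsup (fun _ : ℝ => ((x i j t1.toReal : ℝ) : EReal)) atTop :=
        (limsup_const _).symm
      rw [hc]
      refine limsup_le_limsup ?_
      filter_upwards [eventually_ge_atTop t1.toReal] with s hs
      exact_mod_cast hx.mono i j hij h1pos.le (h1pos.le.trans hs) hs
    refine le_trans ?_ hstep2
    exact_mod_cast hstep1
  · have h20 : t2 ≠ 0 := by
      intro hh
      rw [hh] at hlt
      exact (not_lt_of_ge (zero_le (a := t1))) hlt
    have h2pos : 0 < t2.toReal := ENNReal.toReal_pos h20 h2top
    have h12 : t1.toReal < t2.toReal := (ENNReal.toReal_lt_toReal h1top h2top).2 hlt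
    rw [preLimE_of_ne h10 h1top, preLimE_of_ne h20 h2top]
    have htend2 := leftLim_tendsto_of_ex (hx.leftLimEx i j _ h2pos)
    have hstep2 : x i j t1.toReal ≤ Function.leftLim (x i j) t2.toReal := by
      refine ge_of_tendsto htend2 ?_
      filter_upwards [Ioo_mem_nhdsLT h12] with s hs
      exact hx.mono i j hij h1pos.le (h1pos.le.trans hs.1.le) hs.1.le
    exact_mod_cast hstep1.trans hstep2

def offSum (x : Fin d → Fin d → ℝ → ℝ) (i : Fin d) (v : Fin d → ℝ≥0∞) : EReal :=
  ∑ j ∈ Finset.univ.erase i, preLimE (x i j) (v j)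

def lvl (x : Fin d → Fin d → ℝ → ℝ) (r : Fin d → ℝ) (i : Fin d) (v : Fin d → ℝ≥0∞) :
    EReal :=
  ((-(r i) : ℝ) : EReal) - offSum x i v

def gam (x : Fin d → Fin d → ℝ → ℝ) (r : Fin d → ℝ) (v : Fin d → ℝ≥0∞) :
    Fin d → ℝ≥0∞ :=
  fun i => sInf {t : ℝ≥0∞ | preLimE (x i i) t ≤ lvl x r i v}

lemma offSum_nonneg (hx : MemE d x) (i : Fin d) (v : Fin d → ℝ≥0∞) :
    (0 : EReal) ≤ offSum x i v :=
  Finset.sum_nonneg fun j hj => off_nonneg hx (Finset.ne_of_mem_erase hj).symm (v j)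

lemma offSum_mono (hx : MemE d x) (i : Fin d) {v w : Fin d → ℝ≥0∞} (h : v ≤ w) :
    offSum x i v ≤ offSum x i w :=
  Finset.sum_le_sum fun j hj =>
    off_mono hx (Finset.ne_of_mem_erase hj).symm (h j)

lemma lvl_anti (hx : MemE d x) (r : Fin d → ℝ) (i : Fin d) {v w : Fin d → ℝ≥0∞}
    (h : v ≤ w) : lvl x r i w ≤ lvl x r i v :=
  EReal.sub_le_sub (le_refl _) (offSum_mono hx i h)

lemma lvl_nonpos (hx : MemE d x) {r : Fin d → ℝ} (hr : ∀ i, 0 ≤ r i) (i : Fin d)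
    (v : Fin d → ℝ≥0∞) : lvl x r i v ≤ 0 := by
  have h1 : lvl x r i v ≤ ((-(r i) : ℝ) : EReal) - 0 :=
    EReal.sub_le_sub (le_refl _) (offSum_nonneg hx i v)
  rw [sub_zero] at h1
  refine h1.trans ?_
  exact_mod_cast neg_nonpos.2 (hr i)

lemma gam_mono (hx : MemE d x) (r : Fin d → ℝ) {v w : Fin d → ℝ≥0∞} (h : v ≤ w) :
    gam x r v ≤ gam x r w := by
  intro i
  refine sInf_le_sInf ?_
  intro t ht
  exact le_trans ht (lvl_anti hx r i h)

lemma sum_split (i : Fin d) (v : Fin d → ℝ≥0∞) :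
    ∑ j, preLimE (x i j) (v j) = preLimE (x i i) (v i) + offSum x i v :=
  (Finset.add_sum_erase _ _ (Finset.mem_univ i)).symm

lemma gam_le_of_subsol (hx : MemE d x) (r : Fin d → ℝ) {u : Fin d → ℝ≥0∞}
    (hu : ∀ i, u i ≠ ⊤ → ∑ j, preLimE (x i j) (u j) ≤ ((-(r i) : ℝ) : EReal)) :
    gam x r u ≤ u := by
  intro i
  by_cases hui : u i = ⊤
  · rw [hui]; exact le_top
  · have hsum := hu i hui
    rw [sum_split] at hsum
    obtain ⟨c, hc⟩ := preLimE_real hui (x i i)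
    have hofftop : offSum x i u ≠ ⊤ := by
      intro h
      rw [hc, h, EReal.coe_add_top, top_le_iff] at hsum
      exact EReal.coe_ne_top _ hsum
    have hoffbot : offSum x i u ≠ ⊥ := by
      intro h
      have := offSum_nonneg hx i u
      rw [h, le_bot_iff] at this
      simp at this
    have hdiag : preLimE (x i i) (u i) ≤ lvl x r i u := by
      rw [lvl, EReal.le_sub_iff_add_le (Or.inl hoffbot) (Or.inl hofftop)]
      exact hsum
    exact sInf_le hdiag

lemma solution_of_fixed (hx : MemE d x) {r : Fin d → ℝ} (hr : ∀ i, 0 ≤ r i)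
    {v : Fin d → ℝ≥0∞} (hfix : gam x r v = v) :
    ∀ i, v i ≠ ⊤ → (r i : EReal) + ∑ j, preLimE (x i j) (v j) = 0 := by
  intro i hvi
  have hfixi : sInf {t : ℝ≥0∞ | preLimE (x i i) t ≤ lvl x r i v} = v i :=
    congrFun hfix i
  have hub := passage_le (hx.rightCont i i) (hx.leftLimEx i i) (hx.skipFree i)
    hfixi hvi
  have hlb := passage_ge (hx.rightCont i i) (hx.leftLimEx i i) (hx.skipFree i)
    (hx.zero i i) (lvl_nonpos hx hr i v) hfixi hvi
  have heq : preLimE (x i i) (v i) = lvl x r i v := le_antisymm hub hlb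
  obtain ⟨cd, hcd⟩ := preLimE_real hvi (x i i)
  have hoffbot : offSum x i v ≠ ⊥ := by
    intro h
    have := offSum_nonneg hx i v
    rw [h, le_bot_iff] at this
    simp at this
  have hofftop : offSum x i v ≠ ⊤ := by
    intro h
    rw [lvl, h] at heq
    rw [hcd] at heq
    simp only [EReal.sub_top] at heq
    exact EReal.coe_ne_bot _ heq
  lift offSum x i v to ℝ using ⟨hofftop, hoffbot⟩ with c hcoff
  rw [sum_split, heq, lvl, ← hcoff]
  norm_cast
  ring



/-- if `u ∈ [0,∞]^d` satisfies `∑_j x^{i,j}(u_j−) ≤ −r_i` for every `i` with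
`u_i < ∞`, then `u ≥ s`, where `s` is the smallest solution of `(r, x)`. Consequently, for
every finite `u < s` there is a coordinate `i` with `∑_j x^{i,j}(u_j−) > −r_i`. -/
theorem smallest_solution_comparison (d : ℕ) (hd : 1 ≤ d)
    (x : Fin d → Fin d → ℝ → ℝ) (hx : MemE d x)
    (r : Fin d → ℝ) (hr : ∀ i, 0 ≤ r i)
    (s : Fin d → ℝ≥0∞) (hs : IsSmallestSolution d x r s) :
    (∀ u : Fin d → ℝ≥0∞,
        (∀ i, u i ≠ ⊤ → ∑ j, preLimE (x i j) (u j) ≤ (-(r i) : ℝ)) → s ≤ u) ∧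
    (∀ u : Fin d → ℝ≥0∞, (∀ i, u i ≠ ⊤) → u ≤ s → u ≠ s →
        ∃ i, ((-(r i) : ℝ) : EReal) < ∑ j, preLimE (x i j) (u j)) := by
  have part1 : ∀ u : Fin d → ℝ≥0∞,
      (∀ i, u i ≠ ⊤ → ∑ j, preLimE (x i j) (u j) ≤ ((-(r i) : ℝ) : EReal)) → s ≤ u := by
    intro u hu
    set A : Set (Fin d → ℝ≥0∞) := {v | gam x r v ≤ v ∧ v ≤ u} with hA
    have huA : u ∈ A := ⟨gam_le_of_subsol hx r hu, le_refl u⟩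
    have hσu : sInf A ≤ u := sInf_le huA
    have h1 : gam x r (sInf A) ≤ sInf A := by
      refine le_sInf fun v hv => ?_
      exact le_trans (gam_mono hx r (sInf_le hv)) hv.1
    have h2 : gam x r (sInf A) ∈ A := ⟨gam_mono hx r h1, le_trans h1 hσu⟩
    have h3 : sInf A ≤ gam x r (sInf A) := sInf_le h2
    have hfix : gam x r (sInf A) = sInf A := le_antisymm h1 h3
    have hsol : IsSolution d x r (sInf A) := solution_of_fixed hx hr hfix
    exact le_trans (hs.2 _ hsol) hσu
  refine ⟨part1, ?_⟩
  intro u hufin hle hne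
  by_contra hcon
  push_neg at hcon
  exact hne (le_antisymm hle (part1 u fun i _ => hcon i))

end
end

section
/- Let x ∈ E_d, r ∈ ℝ₊^d, and let s be the smallest solution of the system (r, x). Then for every i ∈ [d]_s (i.e. every i with s_i < ∞), s_i = inf{ t ≥ 0 : x^{i,i}(t−) = inf_{0 ≤ u ≤ s_i} x^{i,i}(u) }. -/
open Filter Topology Set
open scoped ENNReal

noncomputable section

/-- The left limit of `f` at a nonnegative real time `t`, with the convention
`f(0−) = f(0)`. -/
def leftLimR (f : ℝ → ℝ) (t : ℝ) : ℝ :=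
  if t ≤ 0 then f 0 else Function.leftLim f t

namespace SSAux

open Filter Topology Set
open scoped ENNReal NNReal

/-- left value of `g` at extended time `u ∈ [0,∞]`, as sup of values strictly before
(with `g 0` always included). -/
noncomputable def Lval (g : ℝ → ℝ) (u : ℝ≥0∞) : EReal :=
  ((g 0 : ℝ) : EReal) ⊔ ⨆ (w : ℝ≥0) (_ : (w : ℝ≥0∞) < u), ((g (w : ℝ) : ℝ) : EReal)

lemma g0_le_Lval (g : ℝ → ℝ) (u : ℝ≥0∞) : ((g 0 : ℝ) : EReal) ≤ Lval g u := le_sup_left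

lemma coe_le_Lval (g : ℝ → ℝ) {u : ℝ≥0∞} {w : ℝ≥0} (hw : (w : ℝ≥0∞) < u) :
    ((g (w : ℝ) : ℝ) : EReal) ≤ Lval g u :=
  le_trans (le_iSup₂ (f := fun (w : ℝ≥0) (_ : (w : ℝ≥0∞) < u) => ((g (w:ℝ) : ℝ) : EReal)) w hw)
    le_sup_right

lemma Lval_mono (g : ℝ → ℝ) : Monotone (Lval g) := by
  intro u v huv
  refine sup_le le_sup_left ?_
  refine iSup₂_le fun w hw => coe_le_Lval g (lt_of_lt_of_le hw huv)

lemma Lval_ne_bot (g : ℝ → ℝ) (u : ℝ≥0∞) : Lval g u ≠ ⊥ :=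
  fun h => by simpa [h] using g0_le_Lval g u

/-- The key identification: for a càdlàg function `g` monotone on `[0,∞)`,
`preLimE g u = Lval g u`. -/
lemma preLimE_eq_Lval (g : ℝ → ℝ)
    (hmono : MonotoneOn g (Set.Ici 0))
    (hex : ∀ t : ℝ, 0 < t → ∃ l : ℝ, Tendsto g (nhdsWithin t (Set.Iio t)) (nhds l))
    (u : ℝ≥0∞) : preLimE g u = Lval g u := by
  rcases eq_or_ne u 0 with rfl | hu0
  · rw [preLimE, if_pos rfl]
    refine le_antisymm (g0_le_Lval g 0) (sup_le le_rfl (iSup₂_le fun w hw => ?_))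
    exact absurd hw (by simp)
  rcases eq_or_ne u ⊤ with rfl | hutop
  · rw [preLimE, if_neg hu0, if_pos rfl]
    refine le_antisymm ?_ ?_
    · refine limsup_le_of_le (by isBoundedDefault) ?_
      filter_upwards [eventually_ge_atTop (0:ℝ)] with v hv
      have h1 : ((v.toNNReal : ℝ≥0) : ℝ≥0∞) < ⊤ := ENNReal.coe_lt_top
      have h2 := coe_le_Lval g h1
      rwa [Real.coe_toNNReal v hv] at h2
    · refine sup_le ?_ (iSup₂_le fun w hw => ?_)
      · refine le_limsup_of_frequently_le ?_ (by isBoundedDefault)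
        refine (eventually_ge_atTop (0:ℝ)).mono (fun v hv => ?_) |>.frequently
        exact_mod_cast hmono (le_refl (0:ℝ)) hv hv
      · refine le_limsup_of_frequently_le ?_ (by isBoundedDefault)
        refine (eventually_ge_atTop ((w:ℝ))).mono (fun v hv => ?_) |>.frequently
        exact_mod_cast hmono w.2 (le_trans w.2 hv) hv
  · rw [preLimE, if_neg hu0, if_neg hutop]
    set t := u.toReal with htdef
    have ht : 0 < t := ENNReal.toReal_pos hu0 hutop
    obtain ⟨l, hl⟩ := hex t ht
    have hleft : Function.leftLim g t = l :=
      leftLim_eq_of_tendsto hl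
    rw [hleft]
    -- useful: (w : ℝ≥0∞) < u ↔ (w:ℝ) < t
    have hwlt : ∀ w : ℝ≥0, ((w : ℝ≥0∞) < u ↔ (w : ℝ) < t) := by
      intro w
      rw [← ENNReal.toReal_lt_toReal ENNReal.coe_ne_top hutop, ENNReal.coe_toReal]
    refine le_antisymm ?_ ?_
    · -- l ≤ Lval
      rcases eq_or_ne (Lval g u) ⊤ with hT | hT
      · exact hT ▸ le_top
      have hB := EReal.coe_toReal hT (Lval_ne_bot g u)
      rw [← hB, EReal.coe_le_coe_iff]
      refine le_of_tendsto hl ?_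
      filter_upwards [Ioo_mem_nhdsLT ht] with v hv
      have hv0 : (0:ℝ) ≤ v := le_of_lt hv.1
      have hlt : ((v.toNNReal : ℝ≥0) : ℝ≥0∞) < u := (hwlt _).2 (by rw [Real.coe_toNNReal v hv0]; exact hv.2)
      have h2 := coe_le_Lval g hlt
      rw [Real.coe_toNNReal v hv0, ← hB] at h2
      exact_mod_cast h2
    · refine sup_le ?_ (iSup₂_le fun w hw => ?_)
      · rw [EReal.coe_le_coe_iff]
        refine ge_of_tendsto hl ?_
        filter_upwards [Ioo_mem_nhdsLT ht] with v hv
        exact hmono (le_refl (0:ℝ)) (le_of_lt hv.1) (le_of_lt hv.1)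
      · rw [EReal.coe_le_coe_iff]
        refine ge_of_tendsto hl ?_
        have hwt : (w:ℝ) < t := (hwlt w).1 hw
        filter_upwards [Ioo_mem_nhdsLT hwt] with v hv
        exact hmono w.2 (le_trans w.2 (le_of_lt hv.1)) (le_of_lt hv.1)

lemma preLimE_diag (g : ℝ → ℝ) {u : ℝ≥0∞} (hu : u ≠ ⊤) :
    preLimE g u = ((leftLimR g u.toReal : ℝ) : EReal) := by
  rcases eq_or_ne u 0 with rfl | hu0
  · simp [preLimE, leftLimR]
  · have ht : 0 < u.toReal := ENNReal.toReal_pos hu0 hu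
    rw [preLimE, if_neg hu0, if_neg hu, leftLimR, if_neg (not_le.mpr ht)]

/-- first passage of left limits below level `c` (real level). -/
noncomputable def tauR (g : ℝ → ℝ) (c : ℝ) : ℝ≥0∞ :=
  sInf {t : ℝ≥0∞ | t ≠ ⊤ ∧ leftLimR g t.toReal ≤ c}

/-- first passage with extended level. -/
noncomputable def tauE (g : ℝ → ℝ) (a : EReal) : ℝ≥0∞ :=
  sInf {t : ℝ≥0∞ | t ≠ ⊤ ∧ ((leftLimR g t.toReal : ℝ) : EReal) ≤ -a}

lemma tauE_coe (g : ℝ → ℝ) (b : ℝ) : tauE g ((b : ℝ) : EReal) = tauR g (-b) := by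
  unfold tauE tauR
  congr 1
  ext t
  rw [Set.mem_setOf_eq, Set.mem_setOf_eq, ← EReal.coe_neg, EReal.coe_le_coe_iff]

lemma tauE_mono (g : ℝ → ℝ) : Monotone (tauE g) := by
  intro a b hab
  exact sInf_le_sInf (fun t ht => ⟨ht.1, ht.2.trans (EReal.neg_le_neg_iff.mpr hab)⟩)

lemma tauE_top (g : ℝ → ℝ) : tauE g ⊤ = ⊤ := by
  have : {t : ℝ≥0∞ | t ≠ ⊤ ∧ ((leftLimR g t.toReal : ℝ) : EReal) ≤ -(⊤ : EReal)} = ∅ := by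
    ext t
    simp
  rw [tauE, this, sInf_empty]

variable {d : ℕ} (x : Fin d → Fin d → ℝ → ℝ) (r : Fin d → ℝ)

noncomputable def Av (u : Fin d → ℝ≥0∞) (k : Fin d) : EReal :=
  (r k : EReal) + ∑ j ∈ Finset.univ.erase k, Lval (x k j) (u j)

noncomputable def Phi (u : Fin d → ℝ≥0∞) (k : Fin d) : ℝ≥0∞ :=
  tauE (x k k) (Av x r u k)

lemma Av_mono (k : Fin d) : Monotone (fun u => Av x r u k) := by
  intro u v huv
  exact add_le_add le_rfl (Finset.sum_le_sum fun j _ => Lval_mono _ (huv j))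

lemma Av_nonneg (hr : ∀ i, 0 ≤ r i) (hx0 : ∀ i j, x i j 0 = 0) (u : Fin d → ℝ≥0∞)
    (k : Fin d) : 0 ≤ Av x r u k := by
  refine add_nonneg (by exact_mod_cast hr k) (Finset.sum_nonneg fun j _ => ?_)
  have h := g0_le_Lval (x k j) (u j)
  rw [hx0 k j] at h
  exact_mod_cast h

lemma Av_ne_bot (hr : ∀ i, 0 ≤ r i) (hx0 : ∀ i j, x i j 0 = 0) (u : Fin d → ℝ≥0∞)
    (k : Fin d) : Av x r u k ≠ ⊥ :=
  ((lt_of_lt_of_le (by norm_num) (Av_nonneg x r hr hx0 u k))).ne'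

lemma Phi_mono : Monotone (Phi x r) := by
  intro u v huv k
  exact tauE_mono _ (Av_mono x r k huv)

lemma sum_preLimE (hx : MemE d x) (u : Fin d → ℝ≥0∞) (k : Fin d) :
    ∑ j, preLimE (x k j) (u j) =
      preLimE (x k k) (u k) + ∑ j ∈ Finset.univ.erase k, Lval (x k j) (u j) := by
  rw [add_comm, ← Finset.sum_erase_add _ _ (Finset.mem_univ k)]
  congr 1
  refine Finset.sum_congr rfl fun j hj => ?_
  exact preLimE_eq_Lval _ (hx.mono k j (Ne.symm (Finset.ne_of_mem_erase hj)))
    (hx.leftLimEx k j) _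

lemma eq_neg_of_coe_add_eq_zero {b : ℝ} {A : EReal} (h : (b : EReal) + A = 0) :
    A = ((-b : ℝ) : EReal) := by
  have h2 : ((-b : ℝ) : EReal) + ((b : EReal) + A) = ((-b : ℝ) : EReal) := by
    rw [h, add_zero]
  rwa [← add_assoc, ← EReal.coe_add, neg_add_cancel, EReal.coe_zero, zero_add] at h2

lemma solution_eq (hx : MemE d x) {u : Fin d → ℝ≥0∞} (hsol : IsSolution d x r u)
    (k : Fin d) (hk : u k ≠ ⊤) :
    ((leftLimR (x k k) ((u k).toReal) : ℝ) : EReal) + Av x r u k = 0 := by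
  have h := hsol k hk
  rw [sum_preLimE x hx u k, preLimE_diag _ hk, add_left_comm] at h
  have hAv : Av x r u k
      = (r k : EReal) + ∑ j ∈ Finset.univ.erase k, Lval (x k j) (u j) := rfl
  rw [hAv]
  exact h

lemma Av_eq_neg (hx : MemE d x) {u : Fin d → ℝ≥0∞} (hsol : IsSolution d x r u)
    (k : Fin d) (hk : u k ≠ ⊤) :
    Av x r u k = ((-(leftLimR (x k k) ((u k).toReal)) : ℝ) : EReal) :=
  eq_neg_of_coe_add_eq_zero (solution_eq x r hx hsol k hk)

lemma Phi_le_of_solution (hx : MemE d x) {u : Fin d → ℝ≥0∞}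
    (hsol : IsSolution d x r u) : Phi x r u ≤ u := by
  intro k
  rcases eq_or_ne (u k) ⊤ with h | h
  · rw [h]; exact le_top
  · refine sInf_le ⟨h, ?_⟩
    rw [Av_eq_neg x r hx hsol k h, ← EReal.coe_neg, neg_neg]

lemma tendsto_leftLim (hx : MemE d x) (i j : Fin d) {t : ℝ} (ht : 0 < t) :
    Tendsto (x i j) (nhdsWithin t (Set.Iio t)) (nhds (Function.leftLim (x i j) t)) := by
  obtain ⟨l, hl⟩ := hx.leftLimEx i j t ht
  rwa [leftLim_eq_of_tendsto hl]

lemma le_on_right_of_lt (hx : MemE d x) (i j : Fin d) {t b c : ℝ} (ht : 0 ≤ t)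
    (htb : t < b) (h : ∀ v, t < v → v < b → c ≤ x i j v) : c ≤ x i j t := by
  have h2 : Tendsto (x i j) (nhdsWithin t (Set.Ioi t)) (nhds (x i j t)) :=
    (hx.rightCont i j t ht).mono_left (nhdsWithin_mono _ Set.Ioi_subset_Ici_self)
  refine ge_of_tendsto h2 ?_
  filter_upwards [Ioo_mem_nhdsGT htb] with v hv
  exact h v hv.1 hv.2

lemma lt_leftLim_of_lt_tau (g : ℝ → ℝ) {c v : ℝ} (hne : tauR g c ≠ ⊤)
    (hv0 : 0 ≤ v) (hvT : v < (tauR g c).toReal) : c < leftLimR g v := by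
  by_contra hle
  push_neg at hle
  have hv : ENNReal.ofReal v ∈ {t : ℝ≥0∞ | t ≠ ⊤ ∧ leftLimR g t.toReal ≤ c} :=
    ⟨ENNReal.ofReal_ne_top, by rwa [ENNReal.toReal_ofReal hv0]⟩
  have h1 : tauR g c ≤ ENNReal.ofReal v := sInf_le hv
  have h2 : ENNReal.ofReal v < tauR g c :=
    (ENNReal.ofReal_lt_iff_lt_toReal hv0 hne).mpr hvT
  exact absurd h1 (not_le.mpr h2)

lemma f_le_at_right_approach (hx : MemE d x) (i : Fin d) {T c : ℝ} (hT : 0 ≤ T)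
    (h : ∀ ε > (0:ℝ), ∃ w, T < w ∧ w < T + ε ∧ Function.leftLim (x i i) w ≤ c) :
    x i i T ≤ c := by
  refine le_of_forall_pos_le_add fun ε hε => ?_
  have hε2 : 0 < ε / 2 := by linarith
  obtain ⟨δ, hδ, hδp⟩ := Metric.continuousWithinAt_iff.mp (hx.rightCont i i T hT) (ε/2) hε2
  obtain ⟨w, hw1, hw2, hw3⟩ := h δ hδ
  have hw0 : 0 < w := lt_of_le_of_lt hT hw1
  have hev : ∀ᶠ v in nhdsWithin w (Set.Iio w), x i i v < c + ε / 2 := by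
    refine Tendsto.eventually_lt_const ?_ (tendsto_leftLim x hx i i hw0)
    exact lt_of_le_of_lt hw3 (by linarith)
  have hIoo : ∀ᶠ v in nhdsWithin w (Set.Iio w), v ∈ Set.Ioo T w :=
    eventually_of_mem (Ioo_mem_nhdsLT hw1) fun v hv => hv
  obtain ⟨v, hv1, hv2⟩ := (hIoo.and hev).exists
  have hvd : dist v T < δ := by
    rw [Real.dist_eq, abs_lt]
    constructor <;> [linarith [hv1.1]; linarith [hv1.2]]
  have := hδp (Set.mem_Ici.mpr (le_of_lt hv1.1)) hvd
  rw [Real.dist_eq, abs_lt] at this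
  linarith [this.1, this.2]

lemma passage_eq (hx : MemE d x) (i : Fin d) {c : ℝ} (hc : c ≤ 0)
    (hne : tauR (x i i) c ≠ ⊤) :
    leftLimR (x i i) (tauR (x i i) c).toReal = c := by
  set f := x i i with hf
  set τ := tauR f c with hτdef
  set T := τ.toReal with hTdef
  have hT0 : (0:ℝ) ≤ T := ENNReal.toReal_nonneg
  have hptw : ∀ v, 0 < v → v < T → c ≤ f v := by
    intro v hv0 hvT
    have h1 := lt_leftLim_of_lt_tau f hne (le_of_lt hv0) hvT
    rw [leftLimR, if_neg (not_le.mpr hv0)] at h1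
    exact le_trans (le_of_lt h1) (hx.skipFree i v hv0)
  have hge : c ≤ leftLimR f T := by
    rcases le_or_gt T 0 with h | h
    · rw [leftLimR, if_pos h, hf, hx.zero i i]
      exact hc
    · rw [leftLimR, if_neg (not_le.mpr h)]
      refine ge_of_tendsto (tendsto_leftLim x hx i i h) ?_
      filter_upwards [Ioo_mem_nhdsLT h] with v hv
      exact hptw v hv.1 hv.2
  have hle : leftLimR f T ≤ c := by
    by_cases hmem : τ ∈ {t : ℝ≥0∞ | t ≠ ⊤ ∧ leftLimR f t.toReal ≤ c}
    · exact hmem.2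
    · have happ : ∀ ε > (0:ℝ), ∃ w, T < w ∧ w < T + ε ∧ Function.leftLim f w ≤ c := by
        intro ε hε
        have hlt : τ < ENNReal.ofReal (T + ε) := by
          rw [ENNReal.lt_ofReal_iff_toReal_lt hne]
          linarith
        obtain ⟨t, ht, htlt⟩ := sInf_lt_iff.mp (lt_of_eq_of_lt hτdef hlt)
        have hτt : τ ≤ t := sInf_le ht
        have hτnet : τ ≠ t := fun hEq => hmem (hEq ▸ ht)
        have htT : T < t.toReal :=
          (ENNReal.toReal_lt_toReal hne ht.1).mpr (lt_of_le_of_ne hτt hτnet)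
        have htTe : t.toReal < T + ε := by
          rw [← ENNReal.lt_ofReal_iff_toReal_lt ht.1]
          exact htlt
        refine ⟨t.toReal, htT, htTe, ?_⟩
        have := ht.2
        rwa [leftLimR, if_neg (not_le.mpr (lt_of_le_of_lt hT0 htT))] at this
      have hfT : f T ≤ c := f_le_at_right_approach x hx i hT0 happ
      rcases le_or_gt T 0 with h | h
      · have hT00 : T = 0 := le_antisymm h hT0
        rw [leftLimR, if_pos h]
        rw [hT00] at hfT
        exact hfT
      · rw [leftLimR, if_neg (not_le.mpr h)]
        exact le_trans (hx.skipFree i T h) hfT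
  exact le_antisymm hle hge

lemma fixed_is_solution (hx : MemE d x) (hr : ∀ i, 0 ≤ r i) {p : Fin d → ℝ≥0∞}
    (hfix : Phi x r p = p) : IsSolution d x r p := by
  intro k hk
  have hbot : Av x r p k ≠ ⊥ := Av_ne_bot x r hr hx.zero p k
  have hAtop : Av x r p k ≠ ⊤ := by
    intro h
    apply hk
    rw [← congrFun hfix k, Phi, h, tauE_top]
  set a := (Av x r p k).toReal with ha
  have hcoe : ((a : ℝ) : EReal) = Av x r p k := EReal.coe_toReal hAtop hbot
  have ha0 : (0:ℝ) ≤ a := by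
    have h0 := Av_nonneg x r hr hx.zero p k
    rw [← hcoe] at h0
    exact_mod_cast h0
  have hτ : p k = tauR (x k k) (-a) := by
    rw [← congrFun hfix k, Phi, ← hcoe, tauE_coe]
  have hne : tauR (x k k) (-a) ≠ ⊤ := by rw [← hτ]; exact hk
  have hP1 : leftLimR (x k k) ((p k).toReal) = -a := by
    rw [hτ]
    exact passage_eq x hx k (by linarith) hne
  show (r k : EReal) + ∑ j, preLimE (x k j) (p j) = 0
  rw [sum_preLimE x hx p k, preLimE_diag _ hk, hP1, add_left_comm]
  have hAv : (r k : EReal) + ∑ j ∈ Finset.univ.erase k, Lval (x k j) (p j)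
      = Av x r p k := rfl
  rw [hAv, ← hcoe, ← EReal.coe_add, neg_add_cancel, EReal.coe_zero]

end SSAux

/-- each finite coordinate of the smallest solution `s` of `(r, x)` satisfies
`s_i = inf { t ≥ 0 : x^{i,i}(t−) = inf_{0 ≤ u ≤ s_i} x^{i,i}(u) }`. -/
theorem smallest_solution_coordinate_at_infimum (d : ℕ) (hd : 1 ≤ d)
    (x : Fin d → Fin d → ℝ → ℝ) (hx : MemE d x)
    (r : Fin d → ℝ) (hr : ∀ i, 0 ≤ r i)
    (s : Fin d → ℝ≥0∞) (hs : IsSmallestSolution d x r s) :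
    ∀ i, s i ≠ ⊤ →
      (s i).toReal =
        sInf {t : ℝ | 0 ≤ t ∧
          leftLimR (x i i) t = sInf (x i i '' Set.Icc 0 (s i).toReal)} := by
  intro i hi
  classical
  obtain ⟨hsol, hmin⟩ := hs
  set F : (Fin d → ℝ≥0∞) →o (Fin d → ℝ≥0∞) := ⟨SSAux.Phi x r, SSAux.Phi_mono x r⟩ with hF
  have hfix : SSAux.Phi x r (OrderHom.lfp F) = OrderHom.lfp F := OrderHom.map_lfp F
  have hps : OrderHom.lfp F ≤ s := OrderHom.lfp_le F (SSAux.Phi_le_of_solution x r hx hsol)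
  have hsp : s ≤ OrderHom.lfp F := hmin _ (SSAux.fixed_is_solution x r hx hr hfix)
  have hseq : SSAux.Phi x r s = s := by
    rw [le_antisymm hsp hps]
    exact hfix
  have hbot : SSAux.Av x r s i ≠ ⊥ := SSAux.Av_ne_bot x r hr hx.zero s i
  have hAtop : SSAux.Av x r s i ≠ ⊤ := by
    intro h
    apply hi
    rw [← congrFun hseq i, SSAux.Phi, h, SSAux.tauE_top]
  set a := (SSAux.Av x r s i).toReal with ha
  have hcoe : ((a : ℝ) : EReal) = SSAux.Av x r s i := EReal.coe_toReal hAtop hbot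
  have ha0 : (0:ℝ) ≤ a := by
    have h0 := SSAux.Av_nonneg x r hr hx.zero s i
    rw [← hcoe] at h0
    exact_mod_cast h0
  have hτ : s i = SSAux.tauR (x i i) (-a) := by
    rw [← congrFun hseq i, SSAux.Phi, ← hcoe, SSAux.tauE_coe]
  have hne : SSAux.tauR (x i i) (-a) ≠ ⊤ := by rw [← hτ]; exact hi
  set T := (s i).toReal with hT
  have hT0 : (0:ℝ) ≤ T := ENNReal.toReal_nonneg
  have hE : leftLimR (x i i) T = -a := by
    rw [hT, hτ]
    exact SSAux.passage_eq x hx i (by linarith) hne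
  have hgt : ∀ v, 0 ≤ v → v < T → -a < leftLimR (x i i) v := by
    intro v hv0 hvT
    refine SSAux.lt_leftLim_of_lt_tau (x i i) hne hv0 ?_
    rw [← hτ]
    exact hvT
  have hlow : ∀ u ∈ Set.Icc (0:ℝ) T, -a ≤ x i i u := by
    rintro u ⟨hu0, huT⟩
    rcases eq_or_lt_of_le huT with hEq | hult
    · rw [hEq]
      rcases le_or_gt T 0 with h | h
      · have hE' := hE
        rw [leftLimR, if_pos h] at hE'
        have hu00 : T = 0 := le_antisymm h hT0
        rw [hu00, hE']
      · have hE' := hE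
        rw [leftLimR, if_neg (not_le.mpr h)] at hE'
        rw [← hE']
        exact hx.skipFree i T h
    · refine SSAux.le_on_right_of_lt x hx i i hu0 hult ?_
      intro v huv hvT
      have hv0 : 0 < v := lt_of_le_of_lt hu0 huv
      have h1 := hgt v (le_of_lt hv0) hvT
      rw [leftLimR, if_neg (not_le.mpr hv0)] at h1
      exact le_trans (le_of_lt h1) (hx.skipFree i v hv0)
  have hmem0 : x i i 0 ∈ x i i '' Set.Icc (0:ℝ) T := ⟨0, ⟨le_rfl, hT0⟩, rfl⟩
  have hbdd : BddBelow (x i i '' Set.Icc (0:ℝ) T) := by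
    refine ⟨-a, ?_⟩
    rintro y ⟨u, hu, rfl⟩
    exact hlow u hu
  set m := sInf (x i i '' Set.Icc (0:ℝ) T) with hm
  have hmge : -a ≤ m := by
    refine le_csInf ⟨_, hmem0⟩ ?_
    rintro y ⟨u, hu, rfl⟩
    exact hlow u hu
  have hmle : m ≤ -a := by
    rcases le_or_gt T 0 with h | h
    · have hE' := hE
      rw [leftLimR, if_pos h] at hE'
      have h1 : m ≤ x i i 0 := csInf_le hbdd hmem0
      rw [hE'] at h1
      exact h1
    · have h3 : m ≤ Function.leftLim (x i i) T := by
        refine ge_of_tendsto (SSAux.tendsto_leftLim x hx i i h) ?_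
        filter_upwards [Ioo_mem_nhdsLT h] with v hv
        exact csInf_le hbdd ⟨v, ⟨le_of_lt hv.1, le_of_lt hv.2⟩, rfl⟩
      have hE' := hE
      rw [leftLimR, if_neg (not_le.mpr h)] at hE'
      rw [hE'] at h3
      exact h3
  have hmeq : m = -a := le_antisymm hmle hmge
  have hTin : T ∈ {t : ℝ | 0 ≤ t ∧ leftLimR (x i i) t = m} := ⟨hT0, by rw [hE, hmeq]⟩
  have hlb : ∀ t ∈ {t : ℝ | 0 ≤ t ∧ leftLimR (x i i) t = m}, T ≤ t := by
    rintro t ⟨ht0, hteq⟩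
    by_contra hlt
    push_neg at hlt
    have h1 := hgt t ht0 hlt
    rw [hteq, hmeq] at h1
    exact lt_irrefl _ h1
  exact le_antisymm (le_csInf ⟨T, hTin⟩ hlb) (csInf_le ⟨T, hlb⟩ hTin)


end
end
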